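/- arXiv:1112.2120 — 2 statements merged into one kernel-verified Lean document; each statement's English description precedes it below -/
import Mathlib

section
/- For every positive integer n, the number of matchings of size n with no left nesting equals n!. -/
/-! ## Permutations of `{1,…,n}` encoded as functions `ℕ → ℕ` (zero outside `[1,n]`). -/

/-- `f` represents a permutation of `{1,…,n}` in one-line notation:
`f j` is the value in position `j` (for `1 ≤ j ≤ n`), and `f` is `0` elsewhere. -/
def IsPermOn (n : ℕ) (f : ℕ → ℕ) : Prop :=
  Set.BijOn f (Set.Icc 1 n) (Set.Icc 1 n) ∧ ∀ i, i ∉ Set.Icc 1 n → f i = 0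

/-- Ascent tops: values `f j` with `2 ≤ j ≤ n` and `f (j-1) < f j`. -/
def permAsc (n : ℕ) (f : ℕ → ℕ) : Set ℕ :=
  {v | ∃ j, 2 ≤ j ∧ j ≤ n ∧ f (j - 1) < f j ∧ v = f j}

/-- Short ascents (adjacencies): ascent tops with `f (j-1) + 1 = f j`. -/
def permAdjAsc (n : ℕ) (f : ℕ → ℕ) : Set ℕ :=
  {v | ∃ j, 2 ≤ j ∧ j ≤ n ∧ f (j - 1) + 1 = f j ∧ v = f j}

/-- Occurrences of the pattern `P`: ascent tops `f j` such that the value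
`f j - 1` occurs in a position greater than `j`. -/
def permP (n : ℕ) (f : ℕ → ℕ) : Set ℕ :=
  {v | ∃ j, 2 ≤ j ∧ j ≤ n ∧ f (j - 1) < f j ∧ v = f j ∧
    ∃ k, j < k ∧ k ≤ n ∧ f k = f j - 1}

/-- Occurrences of the pattern `Q`: ascent tops `f j` such that the value
`f j - 1` occurs in a position less than `j - 1`. -/
def permQ (n : ℕ) (f : ℕ → ℕ) : Set ℕ :=
  {v | ∃ j, 2 ≤ j ∧ j ≤ n ∧ f (j - 1) < f j ∧ v = f j ∧
    ∃ k, 1 ≤ k ∧ k + 1 < j ∧ f k = f j - 1}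

/-- Silly ascents: `(Asc(π) ∪ {π 1}) \ {n}`. -/
def permAscSilly (n : ℕ) (f : ℕ → ℕ) : Set ℕ :=
  (permAsc n f ∪ {f 1}) \ {n}

/-- Occurrences of the silly pattern `P`: silly ascents `a` such that the value
`a + 1` occurs to the left of the value `a`. -/
def permPSilly (n : ℕ) (f : ℕ → ℕ) : Set ℕ :=
  {a | a ∈ permAscSilly n f ∧ ∃ j k, 1 ≤ j ∧ j < k ∧ k ≤ n ∧ f j = a + 1 ∧ f k = a}

/-- Occurrences of the silly pattern `Q`: silly ascents `a` such that the value
`a + 1` occurs to the right of the value `a`. -/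
def permQSilly (n : ℕ) (f : ℕ → ℕ) : Set ℕ :=
  {a | a ∈ permAscSilly n f ∧ ∃ j k, 1 ≤ j ∧ j < k ∧ k ≤ n ∧ f j = a ∧ f k = a + 1}

/-- Right minima: values having no smaller value to their right. -/
def permRmin (n : ℕ) (f : ℕ → ℕ) : Set ℕ :=
  {v | ∃ j, 1 ≤ j ∧ j ≤ n ∧ v = f j ∧ ∀ k, j < k → k ≤ n → f j < f k}

/-- Right maxima: values having no larger value to their right. -/
def permRmax (n : ℕ) (f : ℕ → ℕ) : Set ℕ :=
  {v | ∃ j, 1 ≤ j ∧ j ≤ n ∧ v = f j ∧ ∀ k, j < k → k ≤ n → f k < f j}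

/-- The number of components of the finest decomposition of a permutation into
direct sums: the number of `k ∈ [1,n]` such that `f` maps `{1,…,k}` into itself. -/
noncomputable def permComp (n : ℕ) (f : ℕ → ℕ) : ℕ :=
  Set.ncard {k | 1 ≤ k ∧ k ≤ n ∧ ∀ i, 1 ≤ i → i ≤ k → f i ≤ k}

/-- The number of descents. -/
noncomputable def permDes (n : ℕ) (f : ℕ → ℕ) : ℕ :=
  Set.ncard {j | 2 ≤ j ∧ j ≤ n ∧ f j < f (j - 1)}

/-- Ascent bottoms: values `f j` with `1 ≤ j < n` and `f j < f (j+1)`. -/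
def permAscBottom (n : ℕ) (f : ℕ → ℕ) : Set ℕ :=
  {v | ∃ j, 1 ≤ j ∧ j + 1 ≤ n ∧ f j < f (j + 1) ∧ v = f j}

/-- Long ascent bottoms: values `f j` with `1 ≤ j < n` and `f j < f (j+1) - 1`. -/
def permAscBottomProper (n : ℕ) (f : ℕ → ℕ) : Set ℕ :=
  {v | ∃ j, 1 ≤ j ∧ j + 1 ≤ n ∧ f j + 1 < f (j + 1) ∧ v = f j}

/-! ## Matchings on `{1,…,2n}`.

The arcs are indexed `1,…,n` in increasing order of their closers; `opener i`
and `closer i` are the endpoints of the `i`-th arc (and `0` outside `[1,n]`). -/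

structure Matching (n : ℕ) where
  opener : ℕ → ℕ
  closer : ℕ → ℕ
  opener_lt_closer : ∀ i, 1 ≤ i → i ≤ n → opener i < closer i
  closer_mono : ∀ i j, 1 ≤ i → i < j → j ≤ n → closer i < closer j
  opener_mem : ∀ i, 1 ≤ i → i ≤ n → opener i ∈ Set.Icc 1 (2 * n)
  closer_mem : ∀ i, 1 ≤ i → i ≤ n → closer i ∈ Set.Icc 1 (2 * n)
  opener_inj : ∀ i j, 1 ≤ i → i ≤ n → 1 ≤ j → j ≤ n → opener i = opener j → i = j
  opener_ne_closer : ∀ i j, 1 ≤ i → i ≤ n → 1 ≤ j → j ≤ n → opener i ≠ closer j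
  cover : ∀ m ∈ Set.Icc 1 (2 * n), ∃ i, 1 ≤ i ∧ i ≤ n ∧ (opener i = m ∨ closer i = m)
  opener_eq_zero : ∀ i, i ∉ Set.Icc 1 n → opener i = 0
  closer_eq_zero : ∀ i, i ∉ Set.Icc 1 n → closer i = 0

namespace Matching

variable {n : ℕ}

/-- No left nesting: no pair of arcs `A, B` with `opener A = opener B + 1`
and `closer A < closer B`. -/
def NoLeftNesting (M : Matching n) : Prop :=
  ∀ i j, 1 ≤ i → i ≤ n → 1 ≤ j → j ≤ n →
    ¬(M.opener i = M.opener j + 1 ∧ M.closer i < M.closer j)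

/-- Right nestings, indexed by the arc with the larger closer. -/
def RneSet (M : Matching n) : Set ℕ :=
  {i | 2 ≤ i ∧ i ≤ n ∧ M.opener i < M.opener (i - 1) ∧ M.closer i = M.closer (i - 1) + 1}

/-- Right crossings, indexed by the arc with the larger closer. -/
def RcrSet (M : Matching n) : Set ℕ :=
  {i | 2 ≤ i ∧ i ≤ n ∧ M.opener (i - 1) < M.opener i ∧ M.opener i < M.closer (i - 1) ∧
    M.closer i = M.closer (i - 1) + 1}

/-- Double crossings (both left and right crossings), indexed by the right arc. -/
def LRcrSet (M : Matching n) : Set ℕ :=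
  {i | i ∈ M.RcrSet ∧ M.opener i = M.opener (i - 1) + 1}

/-- Right single crossings. -/
def RcrpSet (M : Matching n) : Set ℕ := M.RcrSet \ M.LRcrSet

/-- Right adjacencies, indexed by the arc with the larger closer. -/
def RadjSet (M : Matching n) : Set ℕ :=
  {i | 2 ≤ i ∧ i ≤ n ∧ M.closer i = M.closer (i - 1) + 1}

/-- Left crossings, indexed by the arc with the smaller opener. -/
def LcrSet (M : Matching n) : Set ℕ :=
  {i | 1 ≤ i ∧ i ≤ n ∧ ∃ j, 1 ≤ j ∧ j ≤ n ∧ M.opener j = M.opener i + 1 ∧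
    M.opener j < M.closer i ∧ M.closer i < M.closer j}

/-- `Min(M)`: arcs whose opener lies to the left of the first closer. -/
def MinSet (M : Matching n) : Set ℕ :=
  {i | 1 ≤ i ∧ i ≤ n ∧ M.opener i < M.closer 1}

/-- The number of components of the finest decomposition of `M` into direct sums:
the number of `k ∈ [1,n]` such that `{1,…,2k}` is a union of arcs. -/
noncomputable def comp (M : Matching n) : ℕ :=
  Set.ncard {k | 1 ≤ k ∧ k ≤ n ∧
    ∀ i, 1 ≤ i → i ≤ n → (M.closer i ≤ 2 * k ∨ 2 * k < M.opener i)}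

/-- `S` is the direct sum of `M` (size `n₁`) and `M'` (size `n₂`): the diagrams
side by side, the elements of `M'` shifted by `2 n₁`. -/
def IsDsum {n₁ n₂ m : ℕ} (M : Matching n₁) (M' : Matching n₂) (S : Matching m) : Prop :=
  m = n₁ + n₂ ∧
  (∀ i, 1 ≤ i → i ≤ n₁ → S.opener i = M.opener i ∧ S.closer i = M.closer i) ∧
  (∀ i, 1 ≤ i → i ≤ n₂ → S.opener (n₁ + i) = M'.opener i + 2 * n₁ ∧
    S.closer (n₁ + i) = M'.closer i + 2 * n₁)

end Matching

/-! ## 0-1-fillings of partition shapes.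

The shape has `len ≥ 1` columns; column `i` (for `1 ≤ i ≤ len`) has height
`shape i ≥ 1`, weakly increasing from left to right (and `shape i = 0` outside
`[1, len]`).  The dots are the cells holding a `1`. -/

structure Filling where
  len : ℕ
  shape : ℕ → ℕ
  dots : Set (ℕ × ℕ)
  len_pos : 1 ≤ len
  shape_pos : ∀ i, 1 ≤ i → i ≤ len → 1 ≤ shape i
  shape_mono : ∀ i j, 1 ≤ i → i ≤ j → j ≤ len → shape i ≤ shape j
  shape_eq_zero : ∀ i, i ∉ Set.Icc 1 len → shape i = 0
  dots_mem : ∀ p ∈ dots, 1 ≤ p.1 ∧ p.1 ≤ len ∧ 1 ≤ p.2 ∧ p.2 ≤ shape p.1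

namespace Filling

/-- The number of dots of a filling. -/
noncomputable def nDots (T : Filling) : ℕ := Set.ncard T.dots

/-- Every column contains exactly one dot. -/
def ColumnStrict (T : Filling) : Prop :=
  ∀ i, 1 ≤ i → i ≤ T.len → ∃! j, (i, j) ∈ T.dots

/-- Every column contains at least one dot. -/
def ColumnPositive (T : Filling) : Prop :=
  ∀ i, 1 ≤ i → i ≤ T.len → ∃ j, (i, j) ∈ T.dots

/-- The length of row `j`: the number of columns of height at least `j`. -/
noncomputable def rowLen (T : Filling) (j : ℕ) : ℕ :=
  Set.ncard {i | 1 ≤ i ∧ i ≤ T.len ∧ j ≤ T.shape i}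

/-- A shape is flat if its nonempty rows have pairwise distinct lengths. -/
def Flat (T : Filling) : Prop :=
  ∀ j j', 1 ≤ j → 1 ≤ j' → j ≠ j' → 1 ≤ T.rowLen j → 1 ≤ T.rowLen j' →
    T.rowLen j ≠ T.rowLen j'

/-- A staircase shape: `shape = (1, 2, …, len)`. -/
def Staircase (T : Filling) : Prop :=
  ∀ i, 1 ≤ i → i ≤ T.len → T.shape i = i

/-- The lazy set `X(T)`: columns having the same height as their left neighbour. -/
def lazySet (T : Filling) : Set ℕ :=
  {i | 2 ≤ i ∧ i ≤ T.len ∧ T.shape (i - 1) = T.shape i}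

/-- Descents of a column-strict filling: columns whose dot is strictly lower
than the dot of the previous column. -/
def DesSet (T : Filling) : Set ℕ :=
  {i | 2 ≤ i ∧ i ≤ T.len ∧ ∃ j j', (i - 1, j) ∈ T.dots ∧ (i, j') ∈ T.dots ∧ j' < j}

/-- Ascents of a column-strict filling. -/
def AscSet (T : Filling) : Set ℕ :=
  {i | 2 ≤ i ∧ i ≤ T.len ∧ ∃ j j', (i - 1, j) ∈ T.dots ∧ (i, j') ∈ T.dots ∧ j < j'}

/-- Repetitions of a column-strict filling. -/
def RepSet (T : Filling) : Set ℕ :=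
  {i | 2 ≤ i ∧ i ≤ T.len ∧ ∃ j, (i - 1, j) ∈ T.dots ∧ (i, j) ∈ T.dots}

/-- Columns with a dot in their topmost cell. -/
def MaxSet (T : Filling) : Set ℕ :=
  {i | 1 ≤ i ∧ i ≤ T.len ∧ (i, T.shape i) ∈ T.dots}

/-- Columns with a dot on the bottom row. -/
def MinSet (T : Filling) : Set ℕ :=
  {i | 1 ≤ i ∧ i ≤ T.len ∧ (i, 1) ∈ T.dots}

/-- For a column-strict filling: columns whose dot is strictly closer to the top
of its column than is any dot strictly to the right. -/
def RmaxColSet (T : Filling) : Set ℕ :=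
  {i | ∃ j, (i, j) ∈ T.dots ∧
    ∀ i' j', (i', j') ∈ T.dots → i < i' → T.shape i - j < T.shape i' - j'}

/-- `rmax(T)`: the number of dots strictly closer to the top of their column
than is any dot strictly to the right. -/
noncomputable def rmaxDots (T : Filling) : ℕ :=
  Set.ncard {p | p ∈ T.dots ∧
    ∀ q ∈ T.dots, p.1 < q.1 → T.shape p.1 - p.2 < T.shape q.1 - q.2}

/-- `lmin(T)`: the number of dots strictly to the left of any dot strictly below. -/
noncomputable def lminDots (T : Filling) : ℕ :=
  Set.ncard {p | p ∈ T.dots ∧ ∀ q ∈ T.dots, q.2 < p.2 → p.1 < q.1}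

/-- The number of components of the finest decomposition of `T` into direct sums:
the number of columns `k` after which the filling can be cut. -/
noncomputable def comp (T : Filling) : ℕ :=
  Set.ncard {k | 1 ≤ k ∧ k ≤ T.len ∧ (k = T.len ∨ T.shape k < T.shape (k + 1)) ∧
    ∀ p ∈ T.dots, k < p.1 → T.shape k < p.2}

/-- `S = T ⊕ T'`: `T'` is placed strictly to the north-east of `T`, the
rectangle below `T'` being filled with empty cells. -/
def IsDsum (T T' S : Filling) : Prop :=
  S.len = T.len + T'.len ∧
  (∀ i, 1 ≤ i → i ≤ T.len → S.shape i = T.shape i) ∧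
  (∀ i, 1 ≤ i → i ≤ T'.len → S.shape (T.len + i) = T.shape T.len + T'.shape i) ∧
  S.dots = T.dots ∪ (fun p : ℕ × ℕ => (p.1 + T.len, p.2 + T.shape T.len)) '' T'.dots

/-- A square shape. -/
def Square (T : Filling) : Prop :=
  ∀ i, 1 ≤ i → i ≤ T.len → T.shape i = T.len

/-- Enriched permutation filling: a positive filling of a square shape in which
a dot is the leftmost dot of its row iff it is the topmost dot of its column. -/
def Enriched (T : Filling) : Prop :=
  T.Square ∧
  (∀ i, 1 ≤ i → i ≤ T.len → ∃ j, (i, j) ∈ T.dots) ∧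
  (∀ j, 1 ≤ j → j ≤ T.len → ∃ i, (i, j) ∈ T.dots) ∧
  (∀ p ∈ T.dots,
    ((∀ q ∈ T.dots, q.2 = p.2 → p.1 ≤ q.1) ↔ (∀ q ∈ T.dots, q.1 = p.1 → q.2 ≤ p.2)))

/-- `S = R ⊞ R'`: boxed sum of enriched permutation fillings. -/
def IsBoxSum (R R' S : Filling) : Prop :=
  S.len = R.len + R'.len ∧
  (∀ i, 1 ≤ i → i ≤ S.len → S.shape i = S.len) ∧
  S.dots = R.dots ∪ (fun p : ℕ × ℕ => (p.1 + R.len, p.2 + R.len)) '' R'.dots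

/-- The number of components of the finest decomposition into boxed sums. -/
noncomputable def boxcomp (T : Filling) : ℕ :=
  Set.ncard {k | 1 ≤ k ∧ k ≤ T.len ∧
    ∀ p ∈ T.dots, (p.1 ≤ k ∧ p.2 ≤ k) ∨ (k < p.1 ∧ k < p.2)}

end Filling

/-! ## Barred permutations, hatted permutations and marked matchings. -/

/-- A barred permutation: a permutation of `{1,…,n}` together with a set of
barred ascent tops. -/
structure BarredPerm where
  n : ℕ
  toFun : ℕ → ℕ
  X : Set ℕ
  n_pos : 1 ≤ n
  isPerm : IsPermOn n toFun
  X_subset : X ⊆ permAsc n toFun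

/-- Direct sum of barred permutations. -/
def BarredPerm.IsDsum (B B' C : BarredPerm) : Prop :=
  C.n = B.n + B'.n ∧
  (∀ i, C.toFun i = if i ≤ B.n then B.toFun i
    else if i ≤ B.n + B'.n then B'.toFun (i - B.n) + B.n else 0) ∧
  C.X = B.X ∪ (fun a => a + B.n) '' B'.X

/-- A hatted permutation: a permutation of `{1,…,n}` together with a set of
hatted silly ascents. -/
structure HattedPerm where
  n : ℕ
  toFun : ℕ → ℕ
  X : Set ℕ
  n_pos : 1 ≤ n
  isPerm : IsPermOn n toFun
  X_subset : X ⊆ permAscSilly n toFun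

/-- Direct sum of hatted permutations. -/
def HattedPerm.IsDsum (B B' C : HattedPerm) : Prop :=
  C.n = B.n + B'.n ∧
  (∀ i, C.toFun i = if i ≤ B.n then B.toFun i
    else if i ≤ B.n + B'.n then B'.toFun (i - B.n) + B.n else 0) ∧
  C.X = B.X ∪ (fun a => a + B.n) '' B'.X

/-- A marked matching: a matching without left nestings together with a set of
marked right adjacencies. -/
structure MarkedMatching where
  n : ℕ
  n_pos : 1 ≤ n
  M : Matching n
  noLeftNesting : M.NoLeftNesting
  X : Set ℕ
  X_subset : X ⊆ M.RadjSet

/-- Direct sum of marked matchings. -/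
def MarkedMatching.IsDsum (A B C : MarkedMatching) : Prop :=
  Matching.IsDsum A.M B.M C.M ∧ C.X = A.X ∪ (fun a => a + A.n) '' B.X

namespace NLNProof
open Matching

variable {n : ℕ}

/-! ### Basic shift functions -/

def dsh (p x : ℕ) : ℕ := if p < x then x - 1 else x
def ush (p x : ℕ) : ℕ := if p ≤ x then x + 1 else x

lemma dsh_lt {p x y : ℕ} (hx : x ≠ p) (hxy : x < y) : dsh p x < dsh p y := by
  unfold dsh; split_ifs <;> omega

lemma dsh_lt_rev {p x y : ℕ} (h : dsh p x < dsh p y) : x < y := by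
  unfold dsh at h; split_ifs at h <;> omega

lemma dsh_inj {p x y : ℕ} (hx : x ≠ p) (hy : y ≠ p) (h : dsh p x = dsh p y) : x = y := by
  unfold dsh at h; split_ifs at h <;> omega

lemma ush_dsh {p x : ℕ} (hx : x ≠ p) (hp : 1 ≤ p) : ush p (dsh p x) = x := by
  unfold dsh ush; split_ifs <;> omega

lemma dsh_ush {p x : ℕ} : dsh p (ush p x) = x := by
  unfold dsh ush; split_ifs <;> omega

lemma ush_lt {p x y : ℕ} : ush p x < ush p y ↔ x < y := by
  unfold ush; split_ifs <;> omega

lemma ush_inj {p x y : ℕ} (h : ush p x = ush p y) : x = y := by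
  unfold ush at h; split_ifs at h <;> omega

/-! ### Structure of matchings of size `n+1` -/

lemma Matching.ext' {M N : Matching n} (ho : M.opener = N.opener)
    (hc : M.closer = N.closer) : M = N := by
  cases M; cases N; cases ho; cases hc; rfl

lemma closer_last (M : Matching (n+1)) : M.closer (n+1) = 2*(n+1) := by
  obtain ⟨i, hi1, hi2, h⟩ := M.cover (2*(n+1)) ⟨by omega, le_rfl⟩
  rcases h with h | h
  · have h1 := M.opener_lt_closer i hi1 hi2
    have h2 := M.closer_mem i hi1 hi2
    rw [Set.mem_Icc] at h2; omega
  · rcases eq_or_lt_of_le hi2 with rfl | hlt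
    · exact h
    · have h1 := M.closer_mono i (n+1) hi1 hlt le_rfl
      have h2 := M.closer_mem (n+1) (by omega) le_rfl
      rw [Set.mem_Icc] at h2; omega

lemma closer_lt_last (M : Matching (n+1)) {i : ℕ} (h1 : 1 ≤ i) (h2 : i ≤ n) :
    M.closer i < 2*(n+1) := by
  have := M.closer_mono i (n+1) h1 (by omega) le_rfl
  rw [closer_last] at this; omega

lemma opener_last_le (M : Matching (n+1)) : M.opener (n+1) ≤ 2*n+1 := by
  have := M.opener_lt_closer (n+1) (by omega) le_rfl
  rw [closer_last] at this; omega

lemma opener_last_pos (M : Matching (n+1)) : 1 ≤ M.opener (n+1) := by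
  have := M.opener_mem (n+1) (by omega) le_rfl
  rw [Set.mem_Icc] at this; exact this.1

lemma opener_ne_last (M : Matching (n+1)) {i : ℕ} (h1 : 1 ≤ i) (h2 : i ≤ n) :
    M.opener i ≠ M.opener (n+1) := by
  intro h
  have := M.opener_inj i (n+1) h1 (by omega) (by omega) le_rfl h
  omega

lemma closer_ne_last_opener (M : Matching (n+1)) {i : ℕ} (h1 : 1 ≤ i) (h2 : i ≤ n) :
    M.closer i ≠ M.opener (n+1) := by
  intro h
  exact M.opener_ne_closer (n+1) i (by omega) le_rfl h1 (by omega) h.symm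

lemma opener_le_of_ne_last (M : Matching (n+1)) {i : ℕ} (h1 : 1 ≤ i) (h2 : i ≤ n) :
    M.opener i ≤ 2*n := by
  have ha := M.opener_lt_closer i h1 (by omega)
  have hb := closer_lt_last M h1 h2
  omega

lemma closer_le_of_ne_last (M : Matching (n+1)) {i : ℕ} (h1 : 1 ≤ i) (h2 : i ≤ n) :
    M.closer i ≤ 2*n+1 := by
  have hb := closer_lt_last M h1 h2; omega

end NLNProof
namespace NLNProof
open Matching
variable {n : ℕ}

def delOp (M : Matching (n+1)) (i : ℕ) : ℕ :=
  if 1 ≤ i ∧ i ≤ n then dsh (M.opener (n+1)) (M.opener i) else 0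

def delCl (M : Matching (n+1)) (i : ℕ) : ℕ :=
  if 1 ≤ i ∧ i ≤ n then dsh (M.opener (n+1)) (M.closer i) else 0

lemma delOp_eq (M : Matching (n+1)) {i : ℕ} (h1 : 1 ≤ i) (h2 : i ≤ n) :
    delOp M i = dsh (M.opener (n+1)) (M.opener i) := if_pos ⟨h1, h2⟩

lemma delCl_eq (M : Matching (n+1)) {i : ℕ} (h1 : 1 ≤ i) (h2 : i ≤ n) :
    delCl M i = dsh (M.opener (n+1)) (M.closer i) := if_pos ⟨h1, h2⟩

/-- Delete the last arc (the one with the largest closer) from a matching. -/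
def deleteArc (M : Matching (n+1)) : Matching n where
  opener := delOp M
  closer := delCl M
  opener_lt_closer i h1 h2 := by
    rw [delOp_eq M h1 h2, delCl_eq M h1 h2]
    exact dsh_lt (opener_ne_last M h1 h2) (M.opener_lt_closer i h1 (by omega))
  closer_mono i j h1 hij hj := by
    rw [delCl_eq M h1 (by omega), delCl_eq M (by omega : 1 ≤ j) hj]
    exact dsh_lt (closer_ne_last_opener M h1 (by omega))
      (M.closer_mono i j h1 hij (by omega))
  opener_mem i h1 h2 := by
    rw [delOp_eq M h1 h2, Set.mem_Icc]
    have ha := M.opener_mem i h1 (by omega)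
    rw [Set.mem_Icc] at ha
    have hb := opener_le_of_ne_last M h1 h2
    have hc := opener_ne_last M h1 h2
    have he := opener_last_pos M
    unfold dsh; split_ifs <;> omega
  closer_mem i h1 h2 := by
    rw [delCl_eq M h1 h2, Set.mem_Icc]
    have ha := M.closer_mem i h1 (by omega)
    rw [Set.mem_Icc] at ha
    have hb := closer_le_of_ne_last M h1 h2
    have hc := closer_ne_last_opener M h1 h2
    have hd := opener_last_le M
    have he := opener_last_pos M
    unfold dsh; split_ifs <;> omega
  opener_inj i j hi1 hi2 hj1 hj2 h := by
    rw [delOp_eq M hi1 hi2, delOp_eq M hj1 hj2] at h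
    exact M.opener_inj i j hi1 (by omega) hj1 (by omega)
      (dsh_inj (opener_ne_last M hi1 hi2) (opener_ne_last M hj1 hj2) h)
  opener_ne_closer i j hi1 hi2 hj1 hj2 := by
    rw [delOp_eq M hi1 hi2, delCl_eq M hj1 hj2]
    intro h
    exact M.opener_ne_closer i j hi1 (by omega) hj1 (by omega)
      (dsh_inj (opener_ne_last M hi1 hi2) (closer_ne_last_opener M hj1 hj2) h)
  cover m hm := by
    rw [Set.mem_Icc] at hm
    have hple := opener_last_le M
    have hppos := opener_last_pos M
    have hm' : ∃ m', (if m < M.opener (n+1) then m else m + 1) = m' := ⟨_, rfl⟩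
    obtain ⟨m', hm'⟩ := hm'
    have hprops : 1 ≤ m' ∧ m' ≤ 2*n+1 ∧ m' ≠ M.opener (n+1) ∧
        dsh (M.opener (n+1)) m' = m := by
      unfold dsh; split_ifs at hm' ⊢ <;> omega
    obtain ⟨hq1, hq2, hq3, hq4⟩ := hprops
    obtain ⟨i, hi1, hi2, h⟩ := M.cover m' (by rw [Set.mem_Icc]; omega)
    have hin : i ≤ n := by
      by_contra hcon
      have hieq : i = n + 1 := by omega
      subst hieq
      rcases h with h | h
      · exact hq3 h.symm
      · rw [closer_last M] at h; omega
    refine ⟨i, hi1, hin, ?_⟩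
    rcases h with h | h
    · left; rw [delOp_eq M hi1 hin, h, hq4]
    · right; rw [delCl_eq M hi1 hin, h, hq4]
  opener_eq_zero i hi := by
    rw [Set.mem_Icc] at hi
    exact if_neg (by omega)
  closer_eq_zero i hi := by
    rw [Set.mem_Icc] at hi
    exact if_neg (by omega)

lemma deleteArc_opener (M : Matching (n+1)) {i : ℕ} (h1 : 1 ≤ i) (h2 : i ≤ n) :
    (deleteArc M).opener i = dsh (M.opener (n+1)) (M.opener i) := by
  show delOp M i = _
  exact delOp_eq M h1 h2

lemma deleteArc_closer (M : Matching (n+1)) {i : ℕ} (h1 : 1 ≤ i) (h2 : i ≤ n) :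
    (deleteArc M).closer i = dsh (M.opener (n+1)) (M.closer i) := by
  show delCl M i = _
  exact delCl_eq M h1 h2

/-- In a matching with no left nesting, no arc opens right after the opener of
the last arc. -/
lemma no_opener_succ (M : Matching (n+1)) (h : M.NoLeftNesting) {i : ℕ}
    (h1 : 1 ≤ i) (h2 : i ≤ n) : M.opener i ≠ M.opener (n+1) + 1 := by
  intro he
  exact h i (n+1) h1 (by omega) (by omega) le_rfl
    ⟨he, by rw [closer_last M]; exact closer_lt_last M h1 h2⟩

lemma deleteArc_nln (M : Matching (n+1)) (h : M.NoLeftNesting) :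
    (deleteArc M).NoLeftNesting := by
  intro i j hi1 hi2 hj1 hj2 hand
  obtain ⟨ho, hc⟩ := hand
  rw [deleteArc_opener M hi1 hi2, deleteArc_opener M hj1 hj2] at ho
  rw [deleteArc_closer M hi1 hi2, deleteArc_closer M hj1 hj2] at hc
  have hio := opener_ne_last M hi1 hi2
  have hjo := opener_ne_last M hj1 hj2
  have hns := no_opener_succ M h hi1 hi2
  have ho' : M.opener i = M.opener j + 1 := by
    unfold dsh at ho; split_ifs at ho <;> omega
  exact h i j hi1 (by omega) hj1 (by omega) ⟨ho', dsh_lt_rev hc⟩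

end NLNProof
namespace NLNProof
open Matching
variable {n : ℕ}

/-- The position at which the new opener is inserted. -/
def insPos (M' : Matching n) (s : ℕ) : ℕ :=
  if 1 ≤ s ∧ s ≤ n then M'.closer s else 2*n+1

lemma insPos_pos (M' : Matching n) (s : ℕ) : 1 ≤ insPos M' s := by
  unfold insPos; split_ifs with h
  · exact ((Set.mem_Icc.1 (M'.closer_mem s h.1 h.2)).1)
  · omega

lemma insPos_le (M' : Matching n) (s : ℕ) : insPos M' s ≤ 2*n+1 := by
  unfold insPos; split_ifs with h
  · have := (Set.mem_Icc.1 (M'.closer_mem s h.1 h.2)).2; omega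
  · omega

lemma insPos_ne_opener (M' : Matching n) (s : ℕ) {i : ℕ} (h1 : 1 ≤ i) (h2 : i ≤ n) :
    M'.opener i ≠ insPos M' s := by
  unfold insPos; split_ifs with h
  · exact M'.opener_ne_closer i s h1 h2 h.1 h.2
  · have := (Set.mem_Icc.1 (M'.opener_mem i h1 h2)).2; omega

def insOp (M' : Matching n) (s : ℕ) (i : ℕ) : ℕ :=
  if i = n+1 then insPos M' s
  else if 1 ≤ i ∧ i ≤ n then ush (insPos M' s) (M'.opener i) else 0

def insCl (M' : Matching n) (s : ℕ) (i : ℕ) : ℕ :=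
  if i = n+1 then 2*(n+1)
  else if 1 ≤ i ∧ i ≤ n then ush (insPos M' s) (M'.closer i) else 0

lemma insOp_eq (M' : Matching n) (s : ℕ) {i : ℕ} (h1 : 1 ≤ i) (h2 : i ≤ n) :
    insOp M' s i = ush (insPos M' s) (M'.opener i) := by
  unfold insOp; rw [if_neg (by omega), if_pos ⟨h1, h2⟩]

lemma insCl_eq (M' : Matching n) (s : ℕ) {i : ℕ} (h1 : 1 ≤ i) (h2 : i ≤ n) :
    insCl M' s i = ush (insPos M' s) (M'.closer i) := by
  unfold insCl; rw [if_neg (by omega), if_pos ⟨h1, h2⟩]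

lemma insOp_last (M' : Matching n) (s : ℕ) : insOp M' s (n+1) = insPos M' s := if_pos rfl

lemma insCl_last (M' : Matching n) (s : ℕ) : insCl M' s (n+1) = 2*(n+1) := if_pos rfl

lemma ush_op_mem (M' : Matching n) (s : ℕ) {i : ℕ} (h1 : 1 ≤ i) (h2 : i ≤ n) :
    1 ≤ ush (insPos M' s) (M'.opener i) ∧ ush (insPos M' s) (M'.opener i) ≤ 2*n+1 := by
  have ha := Set.mem_Icc.1 (M'.opener_mem i h1 h2)
  unfold ush; split_ifs <;> omega

lemma ush_cl_mem (M' : Matching n) (s : ℕ) {i : ℕ} (h1 : 1 ≤ i) (h2 : i ≤ n) :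
    1 ≤ ush (insPos M' s) (M'.closer i) ∧ ush (insPos M' s) (M'.closer i) ≤ 2*n+1 := by
  have ha := Set.mem_Icc.1 (M'.closer_mem i h1 h2)
  unfold ush; split_ifs <;> omega

lemma ush_op_ne_pos (M' : Matching n) (s : ℕ) {i : ℕ} (h1 : 1 ≤ i) (h2 : i ≤ n) :
    ush (insPos M' s) (M'.opener i) ≠ insPos M' s := by
  have := insPos_ne_opener M' s h1 h2
  unfold ush; split_ifs <;> omega

/-- Insert a new arc into `M'` whose closer is the new last point and whose
opener sits immediately before the closer of arc `s` (or at the end if `s = n+1`). -/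
def insertArc (M' : Matching n) (s : ℕ) : Matching (n+1) where
  opener := insOp M' s
  closer := insCl M' s
  opener_lt_closer i h1 h2 := by
    rcases Nat.lt_or_ge i (n+1) with h' | h'
    · rw [insOp_eq M' s h1 (by omega), insCl_eq M' s h1 (by omega)]
      exact ush_lt.2 (M'.opener_lt_closer i h1 (by omega))
    · have : i = n+1 := by omega
      subst this
      rw [insOp_last, insCl_last]
      have := insPos_le M' s; omega
  closer_mono i j h1 hij hj := by
    rcases Nat.lt_or_ge j (n+1) with h' | h'
    · rw [insCl_eq M' s h1 (by omega), insCl_eq M' s (by omega : 1 ≤ j) (by omega)]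
      exact ush_lt.2 (M'.closer_mono i j h1 hij (by omega))
    · have : j = n+1 := by omega
      subst this
      rw [insCl_eq M' s h1 (by omega), insCl_last]
      have := (ush_cl_mem M' s h1 (by omega : i ≤ n)).2; omega
  opener_mem i h1 h2 := by
    rw [Set.mem_Icc]
    rcases Nat.lt_or_ge i (n+1) with h' | h'
    · rw [insOp_eq M' s h1 (by omega)]
      have := ush_op_mem M' s h1 (by omega : i ≤ n); omega
    · have : i = n+1 := by omega
      subst this
      rw [insOp_last]
      have := insPos_le M' s; have := insPos_pos M' s; omega
  closer_mem i h1 h2 := by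
    rw [Set.mem_Icc]
    rcases Nat.lt_or_ge i (n+1) with h' | h'
    · rw [insCl_eq M' s h1 (by omega)]
      have := ush_cl_mem M' s h1 (by omega : i ≤ n); omega
    · have : i = n+1 := by omega
      subst this
      rw [insCl_last]; omega
  opener_inj i j hi1 hi2 hj1 hj2 h := by
    rcases Nat.lt_or_ge i (n+1) with h' | h' <;>
      rcases Nat.lt_or_ge j (n+1) with h'' | h''
    · rw [insOp_eq M' s hi1 (by omega), insOp_eq M' s hj1 (by omega)] at h
      exact M'.opener_inj i j hi1 (by omega) hj1 (by omega) (ush_inj h)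
    · have : j = n+1 := by omega
      subst this
      rw [insOp_eq M' s hi1 (by omega), insOp_last] at h
      exact absurd h (ush_op_ne_pos M' s hi1 (by omega))
    · have : i = n+1 := by omega
      subst this
      rw [insOp_eq M' s hj1 (by omega), insOp_last] at h
      exact absurd h.symm (ush_op_ne_pos M' s hj1 (by omega))
    · omega
  opener_ne_closer i j hi1 hi2 hj1 hj2 h := by
    rcases Nat.lt_or_ge i (n+1) with h' | h' <;>
      rcases Nat.lt_or_ge j (n+1) with h'' | h''
    · rw [insOp_eq M' s hi1 (by omega), insCl_eq M' s hj1 (by omega)] at h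
      exact M'.opener_ne_closer i j hi1 (by omega) hj1 (by omega) (ush_inj h)
    · have : j = n+1 := by omega
      subst this
      rw [insOp_eq M' s hi1 (by omega), insCl_last] at h
      have := (ush_op_mem M' s hi1 (by omega : i ≤ n)).2; omega
    · have : i = n+1 := by omega
      subst this
      rw [insOp_last, insCl_eq M' s hj1 (by omega)] at h
      have h3 := ush_op_ne_pos M' s hj1 (by omega : j ≤ n)
      have h4 := insPos_ne_opener M' s hj1 (by omega : j ≤ n)
      have h5 := M'.opener_ne_closer j j hj1 (by omega) hj1 (by omega)
      -- p = ush p (closer j) is impossible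
      revert h
      have hc := Set.mem_Icc.1 (M'.closer_mem j hj1 (by omega))
      unfold ush; split_ifs <;> omega
    · have hi' : i = n+1 := by omega
      have hj' : j = n+1 := by omega
      subst hi'; subst hj'
      rw [insOp_last, insCl_last] at h
      have := insPos_le M' s; omega
  cover m hm := by
    rw [Set.mem_Icc] at hm
    have hple := insPos_le M' s
    have hppos := insPos_pos M' s
    by_cases hmp : m = insPos M' s
    · exact ⟨n+1, by omega, le_rfl, Or.inl (by rw [insOp_last, hmp])⟩
    by_cases hmlast : m = 2*(n+1)
    · exact ⟨n+1, by omega, le_rfl, Or.inr (by rw [insCl_last, hmlast])⟩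
    have hm0 : ∃ m0, (if m < insPos M' s then m else m - 1) = m0 := ⟨_, rfl⟩
    obtain ⟨m0, hm0⟩ := hm0
    have hprops : 1 ≤ m0 ∧ m0 ≤ 2*n ∧ ush (insPos M' s) m0 = m := by
      unfold ush; split_ifs at hm0 ⊢ <;> omega
    obtain ⟨hq1, hq2, hq3⟩ := hprops
    obtain ⟨i, hi1, hi2, h⟩ := M'.cover m0 (by rw [Set.mem_Icc]; omega)
    refine ⟨i, hi1, by omega, ?_⟩
    rcases h with h | h
    · left; rw [insOp_eq M' s hi1 hi2, h, hq3]
    · right; rw [insCl_eq M' s hi1 hi2, h, hq3]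
  opener_eq_zero i hi := by
    rw [Set.mem_Icc] at hi
    unfold insOp
    rw [if_neg (by omega), if_neg (by omega)]
  closer_eq_zero i hi := by
    rw [Set.mem_Icc] at hi
    unfold insCl
    rw [if_neg (by omega), if_neg (by omega)]

lemma insertArc_opener (M' : Matching n) (s : ℕ) {i : ℕ} (h1 : 1 ≤ i) (h2 : i ≤ n) :
    (insertArc M' s).opener i = ush (insPos M' s) (M'.opener i) := by
  show insOp M' s i = _; exact insOp_eq M' s h1 h2

lemma insertArc_closer (M' : Matching n) (s : ℕ) {i : ℕ} (h1 : 1 ≤ i) (h2 : i ≤ n) :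
    (insertArc M' s).closer i = ush (insPos M' s) (M'.closer i) := by
  show insCl M' s i = _; exact insCl_eq M' s h1 h2

lemma insertArc_opener_last (M' : Matching n) (s : ℕ) :
    (insertArc M' s).opener (n+1) = insPos M' s := insOp_last M' s

lemma insertArc_nln (M' : Matching n) (s : ℕ) (h : M'.NoLeftNesting) :
    (insertArc M' s).NoLeftNesting := by
  intro i j hi1 hi2 hj1 hj2 hand
  obtain ⟨ho, hc⟩ := hand
  rcases Nat.lt_or_ge i (n+1) with h' | h' <;>
    rcases Nat.lt_or_ge j (n+1) with h'' | h''
  · rw [insertArc_opener M' s hi1 (by omega), insertArc_opener M' s hj1 (by omega)] at ho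
    rw [insertArc_closer M' s hi1 (by omega), insertArc_closer M' s hj1 (by omega)] at hc
    have hoi := insPos_ne_opener M' s hi1 (by omega : i ≤ n)
    have hoj := insPos_ne_opener M' s hj1 (by omega : j ≤ n)
    have ho' : M'.opener i = M'.opener j + 1 := by
      revert ho; unfold ush; split_ifs <;> omega
    exact h i j hi1 (by omega) hj1 (by omega) ⟨ho', ush_lt.1 hc⟩
  · -- j = n+1 : opener i = insPos + 1 and closer i < 2(n+1); need: no shifted opener = p+1
    have : j = n+1 := by omega
    subst this
    rw [insertArc_opener M' s hi1 (by omega), insertArc_opener_last] at ho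
    have hoi := insPos_ne_opener M' s hi1 (by omega : i ≤ n)
    revert ho; unfold ush; split_ifs <;> omega
  · have : i = n+1 := by omega
    subst this
    rw [show (insertArc M' s).closer (n+1) = 2*(n+1) from insCl_last M' s] at hc
    rw [insertArc_closer M' s hj1 (by omega)] at hc
    have := (ush_cl_mem M' s hj1 (by omega : j ≤ n)).2; omega
  · have hi' : i = n+1 := by omega
    have hj' : j = n+1 := by omega
    subst hi'; subst hj'
    rw [insertArc_opener_last] at ho
    omega

end NLNProof
namespace NLNProof
open Matching
variable {n : ℕ}

lemma closer_inj {m : ℕ} (M : Matching m) {i j : ℕ} (hi1 : 1 ≤ i) (hi2 : i ≤ m)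
    (hj1 : 1 ≤ j) (hj2 : j ≤ m) (h : M.closer i = M.closer j) : i = j := by
  rcases lt_trichotomy i j with h' | h' | h'
  · have := M.closer_mono i j hi1 h' hj2; omega
  · exact h'
  · have := M.closer_mono j i hj1 h' hi2; omega

open Classical in
/-- The slot code of the last arc. -/
noncomputable def code (M : Matching (n+1)) : ℕ :=
  if h : ∃ j, 1 ≤ j ∧ j ≤ n ∧ M.closer j = M.opener (n+1) + 1 then h.choose else n+1

open Classical in
lemma code_of_exists (M : Matching (n+1))
    (h : ∃ j, 1 ≤ j ∧ j ≤ n ∧ M.closer j = M.opener (n+1) + 1) :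
    1 ≤ code M ∧ code M ≤ n ∧ M.closer (code M) = M.opener (n+1) + 1 := by
  rw [code]
  rw [dif_pos h]
  exact h.choose_spec

open Classical in
lemma code_of_not_exists (M : Matching (n+1))
    (h : ¬ ∃ j, 1 ≤ j ∧ j ≤ n ∧ M.closer j = M.opener (n+1) + 1) :
    code M = n+1 := by
  rw [code, dif_neg h]

lemma code_mem (M : Matching (n+1)) : 1 ≤ code M ∧ code M ≤ n + 1 := by
  by_cases h : ∃ j, 1 ≤ j ∧ j ≤ n ∧ M.closer j = M.opener (n+1) + 1
  · have := code_of_exists M h; omega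
  · rw [code_of_not_exists M h]; omega

/-- For a matching with no left nesting whose last opener is not the
second-to-last point, the point after the last opener is a closer. -/
lemma exists_of_nln (M : Matching (n+1)) (h : M.NoLeftNesting)
    (hp : M.opener (n+1) ≤ 2*n) :
    ∃ j, 1 ≤ j ∧ j ≤ n ∧ M.closer j = M.opener (n+1) + 1 := by
  have hppos := opener_last_pos M
  obtain ⟨i, hi1, hi2, hio⟩ := M.cover (M.opener (n+1) + 1) (by rw [Set.mem_Icc]; omega)
  have hin : i ≤ n := by
    by_contra hcon
    have : i = n+1 := by omega
    subst this
    rcases hio with hio | hio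
    · omega
    · rw [closer_last M] at hio; omega
  rcases hio with hio | hio
  · exact absurd hio (no_opener_succ M h hi1 hin)
  · exact ⟨i, hi1, hin, hio⟩

lemma insPos_delete (M : Matching (n+1)) (h : M.NoLeftNesting) :
    insPos (deleteArc M) (code M) = M.opener (n+1) := by
  have hple := opener_last_le M
  have hppos := opener_last_pos M
  by_cases hp : M.opener (n+1) ≤ 2*n
  · obtain ⟨hc1, hc2, hc3⟩ := code_of_exists M (exists_of_nln M h hp)
    rw [insPos, if_pos ⟨hc1, hc2⟩, deleteArc_closer M hc1 hc2, hc3]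
    unfold dsh; split_ifs <;> omega
  · have hne : ¬ ∃ j, 1 ≤ j ∧ j ≤ n ∧ M.closer j = M.opener (n+1) + 1 := by
      rintro ⟨j, hj1, hj2, hj3⟩
      have := closer_le_of_ne_last M hj1 hj2; omega
    rw [code_of_not_exists M hne, insPos, if_neg (by omega)]; omega

/-- Reinserting the deleted arc recovers the matching. -/
lemma insert_delete (M : Matching (n+1)) (h : M.NoLeftNesting) :
    insertArc (deleteArc M) (code M) = M := by
  have hkey := insPos_delete M h
  have hppos := opener_last_pos M
  apply Matching.ext'
  · funext i
    by_cases hi : i = n+1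
    · subst hi
      rw [show (insertArc (deleteArc M) (code M)).opener (n+1) = _ from
        insOp_last _ _, hkey]
    · by_cases hi' : 1 ≤ i ∧ i ≤ n
      · rw [insertArc_opener _ _ hi'.1 hi'.2, hkey, deleteArc_opener M hi'.1 hi'.2,
          ush_dsh (opener_ne_last M hi'.1 hi'.2) hppos]
      · rw [show (insertArc (deleteArc M) (code M)).opener i = 0 from
          (insertArc _ _).opener_eq_zero i (by rw [Set.mem_Icc]; omega)]
        rw [M.opener_eq_zero i (by rw [Set.mem_Icc]; omega)]
  · funext i
    by_cases hi : i = n+1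
    · subst hi
      rw [show (insertArc (deleteArc M) (code M)).closer (n+1) = _ from
        insCl_last _ _, closer_last M]
    · by_cases hi' : 1 ≤ i ∧ i ≤ n
      · rw [insertArc_closer _ _ hi'.1 hi'.2, hkey, deleteArc_closer M hi'.1 hi'.2,
          ush_dsh (closer_ne_last_opener M hi'.1 hi'.2) hppos]
      · rw [show (insertArc (deleteArc M) (code M)).closer i = 0 from
          (insertArc _ _).closer_eq_zero i (by rw [Set.mem_Icc]; omega)]
        rw [M.closer_eq_zero i (by rw [Set.mem_Icc]; omega)]

/-- Deleting the inserted arc recovers the original matching. -/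
lemma delete_insert (M' : Matching n) (s : ℕ) :
    deleteArc (insertArc M' s) = M' := by
  have hp : (insertArc M' s).opener (n+1) = insPos M' s := insOp_last M' s
  apply Matching.ext'
  · funext i
    by_cases hi' : 1 ≤ i ∧ i ≤ n
    · rw [deleteArc_opener _ hi'.1 hi'.2, hp, insertArc_opener M' s hi'.1 hi'.2, dsh_ush]
    · rw [show (deleteArc (insertArc M' s)).opener i = 0 from
        (deleteArc _).opener_eq_zero i (by rw [Set.mem_Icc]; omega)]
      rw [M'.opener_eq_zero i (by rw [Set.mem_Icc]; omega)]
  · funext i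
    by_cases hi' : 1 ≤ i ∧ i ≤ n
    · rw [deleteArc_closer _ hi'.1 hi'.2, hp, insertArc_closer M' s hi'.1 hi'.2, dsh_ush]
    · rw [show (deleteArc (insertArc M' s)).closer i = 0 from
        (deleteArc _).closer_eq_zero i (by rw [Set.mem_Icc]; omega)]
      rw [M'.closer_eq_zero i (by rw [Set.mem_Icc]; omega)]

lemma code_insert (M' : Matching n) {s : ℕ} (hs1 : 1 ≤ s) (hs2 : s ≤ n+1) :
    code (insertArc M' s) = s := by
  have hp : (insertArc M' s).opener (n+1) = insPos M' s := insOp_last M' s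
  by_cases hs : s ≤ n
  · have hpc : insPos M' s = M'.closer s := if_pos ⟨hs1, hs⟩
    have hub : insPos M' s ≤ M'.closer s := le_of_eq hpc
    have hex : ∃ j, 1 ≤ j ∧ j ≤ n ∧
        (insertArc M' s).closer j = (insertArc M' s).opener (n+1) + 1 := by
      refine ⟨s, hs1, hs, ?_⟩
      rw [hp, insertArc_closer M' s hs1 hs, hpc, ush, if_pos le_rfl]
    obtain ⟨hc1, hc2, hc3⟩ := code_of_exists _ hex
    have hcs : (insertArc M' s).closer s = (insertArc M' s).opener (n+1) + 1 := by
      rw [hp, insertArc_closer M' s hs1 hs, hpc, ush, if_pos le_rfl]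
    exact closer_inj (insertArc M' s) hc1 (by omega) hs1 (by omega) (hc3.trans hcs.symm)
  · have hs' : s = n+1 := by omega
    have hpc : insPos M' s = 2*n+1 := if_neg (by omega)
    have hne : ¬ ∃ j, 1 ≤ j ∧ j ≤ n ∧
        (insertArc M' s).closer j = (insertArc M' s).opener (n+1) + 1 := by
      rintro ⟨j, hj1, hj2, hj3⟩
      rw [hp, hpc, insertArc_closer M' s hj1 hj2] at hj3
      have := (ush_cl_mem M' s hj1 hj2).2; omega
    rw [code_of_not_exists _ hne, hs']

end NLNProof
namespace NLNProof
open Matching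
variable {n : ℕ}

/-- The unique matching of size 1. -/
def M1 : Matching 1 where
  opener i := if i = 1 then 1 else 0
  closer i := if i = 1 then 2 else 0
  opener_lt_closer i h1 h2 := by
    have : i = 1 := by omega
    subst this; simp
  closer_mono i j h1 hij hj := by omega
  opener_mem i h1 h2 := by
    have : i = 1 := by omega
    subst this; simp
  closer_mem i h1 h2 := by
    have : i = 1 := by omega
    subst this; simp
  opener_inj i j hi1 hi2 hj1 hj2 h := by omega
  opener_ne_closer i j hi1 hi2 hj1 hj2 := by
    have hi : i = 1 := by omega
    have hj : j = 1 := by omega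
    subst hi; subst hj; simp
  cover m hm := by
    rw [Set.mem_Icc] at hm
    refine ⟨1, le_rfl, le_rfl, ?_⟩
    simp only [reduceIte]
    omega
  opener_eq_zero i hi := by
    rw [Set.mem_Icc] at hi
    exact if_neg (by omega)
  closer_eq_zero i hi := by
    rw [Set.mem_Icc] at hi
    exact if_neg (by omega)

lemma eq_M1 (M : Matching 1) : M = M1 := by
  have ho : M.opener 1 = 1 := by
    obtain ⟨i, hi1, hi2, h⟩ := M.cover 1 (by rw [Set.mem_Icc]; omega)
    have : i = 1 := by omega
    subst this
    rcases h with h | h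
    · exact h
    · have h1 := M.opener_lt_closer 1 le_rfl le_rfl
      have h2 := Set.mem_Icc.1 (M.opener_mem 1 le_rfl le_rfl)
      omega
  have hc : M.closer 1 = 2 := closer_last (n := 0) M
  apply Matching.ext'
  · funext i
    by_cases hi : i = 1
    · subst hi; rw [ho]; simp [M1]
    · rw [M.opener_eq_zero i (by rw [Set.mem_Icc]; omega)]
      simp [M1, hi]
  · funext i
    by_cases hi : i = 1
    · subst hi; rw [hc]; simp [M1]
    · rw [M.closer_eq_zero i (by rw [Set.mem_Icc]; omega)]
      simp [M1, hi]

lemma base_case : Set.ncard {M : Matching 1 | M.NoLeftNesting} = 1 := by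
  have : {M : Matching 1 | M.NoLeftNesting} = {M1} := by
    apply Set.eq_of_subset_of_subset
    · intro M _; exact eq_M1 M
    · rintro M rfl
      intro i j hi1 hi2 hj1 hj2 hand
      have hi : i = 1 := by omega
      have hj : j = 1 := by omega
      subst hi; subst hj
      have : M1.opener 1 = 1 := by simp [M1]
      omega
  rw [this, Set.ncard_singleton]

lemma step_eq (n : ℕ) :
    Set.ncard {M : Matching (n+1) | M.NoLeftNesting} =
      (n+1) * Set.ncard {M : Matching n | M.NoLeftNesting} := by
  set S1 : Set (Matching (n+1)) := {M | M.NoLeftNesting} with hS1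
  set S0 : Set (Matching n) := {M | M.NoLeftNesting} with hS0
  set T : Set (Matching n × ℕ) := S0 ×ˢ Set.Icc 1 (n+1) with hT
  have hbij : Set.BijOn (fun M => (deleteArc M, code M)) S1 T := by
    refine ⟨?_, ?_, ?_⟩
    · intro M hM
      exact ⟨deleteArc_nln M hM, Set.mem_Icc.2 (code_mem M)⟩
    · intro M hM N hN h
      have h1 : deleteArc M = deleteArc N := congrArg Prod.fst h
      have h2 : code M = code N := congrArg Prod.snd h
      rw [← insert_delete M hM, ← insert_delete N hN, h1, h2]
    · rintro ⟨M', s⟩ ⟨hM', hs⟩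
      rw [Set.mem_Icc] at hs
      refine ⟨insertArc M' s, insertArc_nln M' s hM', ?_⟩
      simp only [Prod.mk.injEq]
      exact ⟨delete_insert M' s, code_insert M' hs.1 hs.2⟩
  have h1 : Set.ncard S1 = Set.ncard T := by
    rw [← hbij.image_eq]
    exact (Set.ncard_image_of_injOn hbij.injOn).symm
  have h2 : Set.ncard T = Set.ncard S0 * (n+1) := by
    have e := Nat.card_congr (Equiv.Set.prod S0 (Set.Icc 1 (n+1)))
    rw [Nat.card_prod] at e
    have eI : Set.ncard (Set.Icc 1 (n+1) : Set ℕ) = n+1 := by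
      rw [← Finset.coe_Icc, Set.ncard_coe_finset, Nat.card_Icc]; omega
    rw [hT, ← Nat.card_coe_set_eq, e, Nat.card_coe_set_eq,
      Nat.card_coe_set_eq, eI]
  rw [h1, h2, Nat.mul_comm]

end NLNProof
/-- For every positive integer `n`, the number of matchings of
size `n` with no left nesting equals `n!`. -/
theorem card_noLeftNesting_matchings (n : ℕ) (hn : 1 ≤ n) :
    Set.ncard {M : Matching n | M.NoLeftNesting} = Nat.factorial n := by
  induction n, hn using Nat.le_induction with
  | base => rw [NLNProof.base_case]; rfl
  | succ n hn ih => rw [NLNProof.step_eq, ih, Nat.factorial_succ]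
end

section
/- There is a bijection f from the set of flat column-strict fillings to the set of marked matchings (pairs (M,X) with M a matching of some size n ≥ 1 with no left nesting and X ⊆ Radj(M)) such that, whenever f(T) = (M,X): n(T) = n(M); Min(T) = Min(M); X(T) = X; Des(T) ∩ X(T) = Rne(M) ∩ X; Asc(T) ∩ X(T) = Rcr'(M) ∩ X; Rep(T) ∩ X(T) = LRcr(M) ∩ X; moreover f(T ⊕ T') = f(T) ⊕ f(T'), where the direct sum of marked matchings places the two matchings side by side (shifting all elements of M' by 2n(M)) and takes the union of the mark sets with X' shifted by n(M). -/
section CNT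

open Classical in
/-- The set of `j ∈ [1,n]` satisfying `P`, as a `Finset`. -/
noncomputable def cset (n : ℕ) (P : ℕ → Prop) : Finset ℕ :=
  (Finset.Icc 1 n).filter P

/-- The number of `j ∈ [1,n]` satisfying `P`. -/
noncomputable def cnt (n : ℕ) (P : ℕ → Prop) : ℕ := (cset n P).card

theorem mem_cset {n : ℕ} {P : ℕ → Prop} {j : ℕ} :
    j ∈ cset n P ↔ (1 ≤ j ∧ j ≤ n) ∧ P j := by
  classical
  simp [cset, Finset.mem_filter, Finset.mem_Icc]

theorem cnt_le_cnt {n : ℕ} {P Q : ℕ → Prop}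
    (h : ∀ j, 1 ≤ j → j ≤ n → P j → Q j) : cnt n P ≤ cnt n Q := by
  apply Finset.card_le_card
  intro j hj
  rw [mem_cset] at *
  exact ⟨hj.1, h j hj.1.1 hj.1.2 hj.2⟩

theorem cnt_congr {n : ℕ} {P Q : ℕ → Prop}
    (h : ∀ j, 1 ≤ j → j ≤ n → (P j ↔ Q j)) : cnt n P = cnt n Q :=
  le_antisymm (cnt_le_cnt fun j h1 h2 hp => (h j h1 h2).1 hp)
    (cnt_le_cnt fun j h1 h2 hq => (h j h1 h2).2 hq)

theorem cnt_false {n : ℕ} {P : ℕ → Prop} (h : ∀ j, 1 ≤ j → j ≤ n → ¬ P j) :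
    cnt n P = 0 := by
  rw [cnt, Finset.card_eq_zero]
  ext j
  simp only [mem_cset, Finset.notMem_empty, iff_false]
  rintro ⟨⟨h1, h2⟩, hp⟩
  exact h j h1 h2 hp

theorem cnt_true {n : ℕ} {P : ℕ → Prop} (h : ∀ j, 1 ≤ j → j ≤ n → P j) :
    cnt n P = n := by
  have : cset n P = Finset.Icc 1 n := by
    ext j
    simp only [mem_cset, Finset.mem_Icc]
    exact ⟨fun hh => hh.1, fun hh => ⟨hh, h j hh.1 hh.2⟩⟩
  rw [cnt, this, Nat.card_Icc]
  omega

theorem cnt_le_n (n : ℕ) (P : ℕ → Prop) : cnt n P ≤ n := by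
  calc cnt n P ≤ cnt n (fun _ => True) := cnt_le_cnt (by intros; trivial)
  _ = n := cnt_true (by intros; trivial)

open Classical in
theorem cnt_succ (n : ℕ) (P : ℕ → Prop) :
    cnt (n + 1) P = cnt n P + if P (n + 1) then 1 else 0 := by
  classical
  have hs : cset (n+1) P = if P (n+1) then insert (n+1) (cset n P) else cset n P := by
    split_ifs with hp
    · ext j
      simp only [mem_cset, Finset.mem_insert]
      constructor
      · rintro ⟨⟨h1, h2⟩, hP⟩
        rcases Nat.lt_or_ge j (n+1) with h | h
        · exact Or.inr ⟨⟨h1, Nat.lt_succ_iff.mp h⟩, hP⟩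
        · exact Or.inl (le_antisymm h2 h)
      · rintro (rfl | ⟨⟨h1, h2⟩, hP⟩)
        · exact ⟨⟨Nat.succ_le_succ (Nat.zero_le n), le_rfl⟩, hp⟩
        · exact ⟨⟨h1, h2.trans (Nat.le_succ n)⟩, hP⟩
    · ext j
      simp only [mem_cset]
      constructor
      · rintro ⟨⟨h1, h2⟩, hP⟩
        rcases Nat.lt_or_ge j (n+1) with h | h
        · exact ⟨⟨h1, Nat.lt_succ_iff.mp h⟩, hP⟩
        · exact absurd hP (le_antisymm h2 h ▸ hp)
      · rintro ⟨⟨h1, h2⟩, hP⟩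
        exact ⟨⟨h1, h2.trans (Nat.le_succ n)⟩, hP⟩
  rw [cnt, hs]
  split_ifs with hp
  · rw [Finset.card_insert_of_notMem (by simp [mem_cset])]
    rfl
  · simp [cnt]

theorem cnt_split {n : ℕ} {P Q : ℕ → Prop}
    (hd : ∀ j, 1 ≤ j → j ≤ n → ¬ (P j ∧ Q j)) :
    cnt n (fun j => P j ∨ Q j) = cnt n P + cnt n Q := by
  classical
  rw [cnt, cnt, cnt, ← Finset.card_union_of_disjoint]
  · congr 1
    ext j
    simp only [Finset.mem_union, mem_cset]
    tauto
  · rw [Finset.disjoint_left]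
    intro j hj hj'
    rw [mem_cset] at hj hj'
    exact hd j hj.1.1 hj.1.2 ⟨hj.2, hj'.2⟩

/-- Strict count inequality given a witness. -/
theorem cnt_lt_cnt {n : ℕ} {P Q : ℕ → Prop}
    (h : ∀ j, 1 ≤ j → j ≤ n → P j → Q j)
    (j₀ : ℕ) (h1 : 1 ≤ j₀) (h2 : j₀ ≤ n) (hq : Q j₀) (hp : ¬ P j₀) :
    cnt n P < cnt n Q := by
  apply Finset.card_lt_card
  rw [Finset.ssubset_iff_of_subset]
  · exact ⟨j₀, mem_cset.mpr ⟨⟨h1, h2⟩, hq⟩, fun hc => hp (mem_cset.mp hc).2⟩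
  · intro j hj
    rw [mem_cset] at *
    exact ⟨hj.1, h j hj.1.1 hj.1.2 hj.2⟩

/-- Count by injecting into another count. -/
theorem cnt_le_cnt_of_inj {n m : ℕ} {P Q : ℕ → Prop} (f : ℕ → ℕ)
    (hf : ∀ j, 1 ≤ j → j ≤ n → P j → (1 ≤ f j ∧ f j ≤ m) ∧ Q (f j))
    (hinj : ∀ j j', 1 ≤ j → j ≤ n → P j → 1 ≤ j' → j' ≤ n → P j' → f j = f j' → j = j') :
    cnt n P ≤ cnt m Q := by
  apply Finset.card_le_card_of_injOn f
  · intro j hj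
    rw [Finset.mem_coe] at hj ⊢
    rw [mem_cset] at *
    have := hf j hj.1.1 hj.1.2 hj.2
    exact ⟨this.1, this.2⟩
  · intro j hj j' hj' hee
    rw [Finset.mem_coe, mem_cset] at hj hj'
    exact hinj j j' hj.1.1 hj.1.2 hj.2 hj'.1.1 hj'.1.2 hj'.2 hee

theorem cnt_shift (n₁ n₂ : ℕ) (P : ℕ → Prop) :
    cnt (n₁ + n₂) P = cnt n₁ P + cnt n₂ (fun j => P (n₁ + j)) := by
  induction n₂ with
  | zero => simp [cnt, cset]
  | succ k ih =>
    rw [← Nat.add_assoc, cnt_succ, ih, cnt_succ, Nat.add_assoc, Nat.add_assoc n₁ k 1]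

theorem cnt_eq_cnt_of_bij {n m : ℕ} {P Q : ℕ → Prop} (f : ℕ → ℕ)
    (hf : ∀ j, 1 ≤ j → j ≤ n → P j → (1 ≤ f j ∧ f j ≤ m) ∧ Q (f j))
    (hinj : ∀ j j', 1 ≤ j → j ≤ n → P j → 1 ≤ j' → j' ≤ n → P j' → f j = f j' → j = j')
    (hsurj : ∀ v, 1 ≤ v → v ≤ m → Q v → ∃ j, 1 ≤ j ∧ j ≤ n ∧ P j ∧ f j = v) :
    cnt n P = cnt m Q := by
  apply Finset.card_bij (fun j _ => f j)
  · intro j hj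
    rw [mem_cset] at *
    exact hf j hj.1.1 hj.1.2 hj.2
  · intro j hj j' hj' hee
    rw [mem_cset] at hj hj'
    exact hinj j j' hj.1.1 hj.1.2 hj.2 hj'.1.1 hj'.1.2 hj'.2 hee
  · intro v hv
    rw [mem_cset] at hv
    obtain ⟨j, h1, h2, hP, hfj⟩ := hsurj v hv.1.1 hv.1.2 hv.2
    exact ⟨j, mem_cset.mpr ⟨⟨h1, h2⟩, hP⟩, hfj⟩

end CNT

section SHP

/-- The shape function determined by a lazy set `X`:
`shp X i` is the number of `j ∈ [1,i]` outside `X`. -/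
noncomputable def shp (X : Set ℕ) (i : ℕ) : ℕ := cnt i (fun j => j ∉ X)

theorem shp_zero (X : Set ℕ) : shp X 0 = 0 := by
  simp [shp, cnt, cset]

theorem shp_succ_mem {X : Set ℕ} {i : ℕ} (h : i + 1 ∈ X) :
    shp X (i + 1) = shp X i := by
  rw [shp, cnt_succ, if_neg (by simpa using h)]
  rfl

theorem shp_succ_not_mem {X : Set ℕ} {i : ℕ} (h : i + 1 ∉ X) :
    shp X (i + 1) = shp X i + 1 := by
  rw [shp, cnt_succ, if_pos (by simpa using h)]
  rfl

theorem shp_succ_le (X : Set ℕ) (i : ℕ) : shp X (i + 1) ≤ shp X i + 1 := by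
  by_cases h : i + 1 ∈ X
  · rw [shp_succ_mem h]; omega
  · rw [shp_succ_not_mem h]

theorem shp_succ_ge (X : Set ℕ) (i : ℕ) : shp X i ≤ shp X (i + 1) := by
  by_cases h : i + 1 ∈ X
  · rw [shp_succ_mem h]
  · rw [shp_succ_not_mem h]; omega

theorem shp_mono (X : Set ℕ) {i j : ℕ} (h : i ≤ j) : shp X i ≤ shp X j := by
  induction j with
  | zero =>
    have : i = 0 := by omega
    subst this; rfl
  | succ k ih =>
    rcases Nat.lt_or_ge i (k+1) with h' | h'
    · exact (ih (by omega)).trans (shp_succ_ge X k)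
    · have : i = k + 1 := by omega
      subst this; rfl

theorem shp_le (X : Set ℕ) (i : ℕ) : shp X i ≤ i := cnt_le_n _ _

theorem shp_one {X : Set ℕ} (h1 : 1 ∉ X) : shp X 1 = 1 := by
  rw [shp, cnt_true]
  intro j hj hj'
  have : j = 1 := by omega
  subst this; exact h1

theorem shp_pos {X : Set ℕ} (h1 : 1 ∉ X) {i : ℕ} (hi : 1 ≤ i) : 1 ≤ shp X i := by
  calc 1 = shp X 1 := (shp_one h1).symm
  _ ≤ shp X i := shp_mono X hi

theorem shp_lt_imp {X : Set ℕ} {i j : ℕ} (h : shp X i < shp X j) : i < j := by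
  by_contra hc
  exact absurd (shp_mono X (by omega : j ≤ i)) (by omega)

/-- Discrete intermediate value. -/
theorem shp_surj {X : Set ℕ} {v m : ℕ} (hv : 1 ≤ v) (hvm : v ≤ shp X m) :
    ∃ j, 1 ≤ j ∧ j ≤ m ∧ shp X j = v := by
  induction m with
  | zero => rw [shp_zero] at hvm; omega
  | succ k ih =>
    rcases le_or_gt v (shp X k) with h | h
    · obtain ⟨j, hj⟩ := ih h
      exact ⟨j, hj.1, hj.2.1.trans (Nat.le_succ k), hj.2.2⟩
    · have h2 := shp_succ_le X k
      have h3 : 1 ≤ k + 1 := by omega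
      exact ⟨k + 1, h3, le_rfl, by omega⟩

/-- A witness with `j + 1 ∉ X` when `v < shp X m`: take the largest preimage. -/
theorem shp_surj_end {X : Set ℕ} {v m : ℕ} (hv : 1 ≤ v)
    (hvm : v < shp X m) :
    ∃ j, 1 ≤ j ∧ j ≤ m ∧ shp X j = v ∧ j + 1 ∉ X := by
  classical
  obtain ⟨j, hj1, hjm, hjv⟩ := shp_surj hv (le_of_lt hvm)
  have hspec : 1 ≤ Nat.findGreatest (fun j' => 1 ≤ j' ∧ shp X j' = v) m ∧
      shp X (Nat.findGreatest (fun j' => 1 ≤ j' ∧ shp X j' = v) m) = v :=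
    Nat.findGreatest_spec (P := fun j' => 1 ≤ j' ∧ shp X j' = v) (m := j) hjm ⟨hj1, hjv⟩
  have hj₀m : Nat.findGreatest (fun j' => 1 ≤ j' ∧ shp X j' = v) m ≤ m :=
    Nat.findGreatest_le m
  refine ⟨_, hspec.1, hj₀m, hspec.2, fun hmem => ?_⟩
  have hs : shp X (Nat.findGreatest (fun j' => 1 ≤ j' ∧ shp X j' = v) m + 1) = v := by
    rw [shp_succ_mem hmem]; exact hspec.2
  rcases Nat.lt_or_ge m (Nat.findGreatest (fun j' => 1 ≤ j' ∧ shp X j' = v) m + 1) with h | h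
  · have he : m = Nat.findGreatest (fun j' => 1 ≤ j' ∧ shp X j' = v) m := by omega
    rw [← he] at hspec
    have := hspec.2
    omega
  · exact Nat.findGreatest_is_greatest (P := fun j' => 1 ≤ j' ∧ shp X j' = v)
      (by omega) h ⟨by omega, hs⟩

/-- Counting block ends below a level. -/
theorem cnt_block_ends {X : Set ℕ} (h1 : 1 ∉ X) {n t : ℕ} (ht : t < shp X n) :
    cnt n (fun j => shp X j ≤ t ∧ j + 1 ∉ X) = t := by
  have key : cnt n (fun j => shp X j ≤ t ∧ j + 1 ∉ X) = cnt t (fun _ => True) := by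
    apply cnt_eq_cnt_of_bij (fun j => shp X j)
    · intro j hj1 hjn hP
      exact ⟨⟨shp_pos h1 hj1, hP.1⟩, trivial⟩
    · intro j j' hj1 hjn hP hj'1 hj'n hP' hee
      by_contra hne
      rcases Nat.lt_or_ge j j' with h | h
      · have h2 : shp X (j + 1) = shp X j + 1 := shp_succ_not_mem hP.2
        have h3 := shp_mono X (by omega : j + 1 ≤ j')
        omega
      · have h' : j' < j := by omega
        have h2 : shp X (j' + 1) = shp X j' + 1 := shp_succ_not_mem hP'.2
        have h3 := shp_mono X (by omega : j' + 1 ≤ j)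
        omega
    · intro v hv1 hvt _
      obtain ⟨j, hja, hjn, hjv, hjX⟩ := shp_surj_end hv1 (show v < shp X n by omega)
      exact ⟨j, hja, hjn, ⟨by omega, hjX⟩, hjv⟩
  rw [key, cnt_true (fun _ _ _ => trivial)]

end SHP

section CNT2

theorem cnt_single {n l : ℕ} (h1 : 1 ≤ l) (h2 : l ≤ n) :
    cnt n (fun j => j = l) = 1 := by
  rw [cnt, Finset.card_eq_one]
  exact ⟨l, by ext j; simp [mem_cset]; omega⟩

theorem cnt_lt_bound {n p : ℕ} {P : ℕ → Prop}
    (h : ∀ j, 1 ≤ j → j ≤ n → P j → j < p) : cnt n P ≤ p - 1 := by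
  have : cset n P ⊆ Finset.Icc 1 (p - 1) := by
    intro j hj
    rw [mem_cset] at hj
    rw [Finset.mem_Icc]
    exact ⟨hj.1.1, by have := h j hj.1.1 hj.1.2 hj.2; omega⟩
  calc cnt n P ≤ (Finset.Icc 1 (p-1)).card := Finset.card_le_card this
  _ = p - 1 := by rw [Nat.card_Icc]; omega

theorem cnt_le_val {n p : ℕ} (h : p ≤ n) : cnt n (fun j => j ≤ p) = p := by
  have : cset n (fun j => j ≤ p) = Finset.Icc 1 p := by
    ext j; rw [mem_cset, Finset.mem_Icc]; omega
  rw [cnt, this, Nat.card_Icc]; omega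

theorem cnt_le_pred {n l : ℕ} {P : ℕ → Prop} (h1 : 1 ≤ l) (h2 : l ≤ n)
    (h : ¬ P l) : cnt n P ≤ n - 1 := by
  have : cnt n P < cnt n (fun _ => True) :=
    cnt_lt_cnt (fun _ _ _ _ => trivial) l h1 h2 trivial h
  rw [cnt_true (fun _ _ _ => trivial)] at this
  omega

end CNT2

/-! ## The common data type -/

/-- The common data underlying a flat column-strict filling and a marked matching:
a size `n`, a lazy set `X ⊆ [2,n]` and a dot-row function `a` with
`1 ≤ a i ≤ shp X i` on `[1,n]`. -/
structure MData where
  n : ℕ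
  X : Set ℕ
  a : ℕ → ℕ
  n_pos : 1 ≤ n
  X_sub : X ⊆ Set.Icc 2 n
  a_lb : ∀ i, 1 ≤ i → i ≤ n → 1 ≤ a i
  a_ub : ∀ i, 1 ≤ i → i ≤ n → a i ≤ shp X i
  a_zero : ∀ i, i ∉ Set.Icc 1 n → a i = 0

namespace MData

theorem ext' {d e : MData} (hn : d.n = e.n) (hX : d.X = e.X) (ha : d.a = e.a) :
    d = e := by
  cases d; cases e
  cases hn; cases hX; cases ha
  rfl

variable (d : MData)

theorem one_not_mem : 1 ∉ d.X := by
  intro h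
  have := d.X_sub h
  rw [Set.mem_Icc] at this
  omega

theorem not_mem_of_gt {x : ℕ} (h : d.n < x) : x ∉ d.X := by
  intro hx
  have := d.X_sub hx
  rw [Set.mem_Icc] at this
  omega

/-- The opener of arc `i` in the matching associated with `d`. -/
noncomputable def mop (i : ℕ) : ℕ :=
  if 1 ≤ i ∧ i ≤ d.n then
    1 + cnt d.n (fun j => shp d.X j < d.a i) + cnt d.n (fun j => d.a j < d.a i)
      + cnt d.n (fun j => d.a j = d.a i ∧ j < i)
  else 0

/-- The closer of arc `i` in the matching associated with `d`. -/
noncomputable def mcl (i : ℕ) : ℕ :=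
  if 1 ≤ i ∧ i ≤ d.n then i + cnt d.n (fun j => d.a j ≤ shp d.X i) else 0

theorem mop_eq {i : ℕ} (h1 : 1 ≤ i) (h2 : i ≤ d.n) :
    d.mop i = 1 + cnt d.n (fun j => shp d.X j < d.a i)
      + cnt d.n (fun j => d.a j < d.a i)
      + cnt d.n (fun j => d.a j = d.a i ∧ j < i) := if_pos ⟨h1, h2⟩

theorem mcl_eq {i : ℕ} (h1 : 1 ≤ i) (h2 : i ≤ d.n) :
    d.mcl i = i + cnt d.n (fun j => d.a j ≤ shp d.X i) := if_pos ⟨h1, h2⟩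

/-- KEY1: if `a l ≤ shp X j` then the opener of `l` precedes the closer of `j`. -/
theorem mop_lt_mcl {l j : ℕ} (hl1 : 1 ≤ l) (hl2 : l ≤ d.n) (hj1 : 1 ≤ j)
    (hj2 : j ≤ d.n) (h : d.a l ≤ shp d.X j) : d.mop l < d.mcl j := by
  rw [mop_eq d hl1 hl2, mcl_eq d hj1 hj2]
  have hA : cnt d.n (fun j' => shp d.X j' < d.a l) ≤ j - 1 := by
    apply cnt_lt_bound
    intro j' _ _ hP
    exact shp_lt_imp (lt_of_lt_of_le hP h)
  have hBE : cnt d.n (fun j' => d.a j' < d.a l)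
      + cnt d.n (fun j' => d.a j' = d.a l ∧ j' < l) + 1
      ≤ cnt d.n (fun j' => d.a j' ≤ shp d.X j) := by
    have hsplit : cnt d.n (fun j' => (d.a j' < d.a l ∨ (d.a j' = d.a l ∧ j' < l)) ∨ j' = l)
        = cnt d.n (fun j' => d.a j' < d.a l) + cnt d.n (fun j' => d.a j' = d.a l ∧ j' < l)
          + 1 := by
      rw [cnt_split (by intro j' _ _ hc; rcases hc with ⟨hc1 | hc1, rfl⟩ <;> omega),
        cnt_split (by intro j' _ _ hc; omega), cnt_single hl1 hl2]
    rw [← hsplit]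
    apply cnt_le_cnt
    intro j' _ _ hP
    rcases hP with (hc | ⟨hc, _⟩) | rfl
    · omega
    · omega
    · exact h
  omega

/-- KEY2: if `shp X j < a l` then the closer of `j` precedes the opener of `l`. -/
theorem mcl_lt_mop {l j : ℕ} (hl1 : 1 ≤ l) (hl2 : l ≤ d.n) (hj1 : 1 ≤ j)
    (hj2 : j ≤ d.n) (h : shp d.X j < d.a l) : d.mcl j < d.mop l := by
  rw [mop_eq d hl1 hl2, mcl_eq d hj1 hj2]
  have hA : j ≤ cnt d.n (fun j' => shp d.X j' < d.a l) := by
    calc j = cnt d.n (fun j' => j' ≤ j) := (cnt_le_val hj2).symm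
    _ ≤ cnt d.n (fun j' => shp d.X j' < d.a l) := by
      apply cnt_le_cnt
      intro j' _ _ hP
      exact lt_of_le_of_lt (shp_mono d.X hP) h
  have hB : cnt d.n (fun j' => d.a j' ≤ shp d.X j) ≤ cnt d.n (fun j' => d.a j' < d.a l) :=
    cnt_le_cnt (fun j' _ _ hP => lt_of_le_of_lt hP h)
  omega

theorem mop_lt_mop {i j : ℕ} (hi1 : 1 ≤ i) (hi2 : i ≤ d.n) (hj1 : 1 ≤ j)
    (hj2 : j ≤ d.n) (h : d.a i < d.a j ∨ (d.a i = d.a j ∧ i < j)) :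
    d.mop i < d.mop j := by
  rw [mop_eq d hi1 hi2, mop_eq d hj1 hj2]
  rcases h with h | ⟨h, hij⟩
  · have hA : cnt d.n (fun j' => shp d.X j' < d.a i) ≤ cnt d.n (fun j' => shp d.X j' < d.a j) :=
      cnt_le_cnt (fun j' _ _ hP => lt_trans hP h)
    have hBE : cnt d.n (fun j' => d.a j' < d.a i)
        + cnt d.n (fun j' => d.a j' = d.a i ∧ j' < i) + 1
        ≤ cnt d.n (fun j' => d.a j' < d.a j) := by
      have hsplit : cnt d.n (fun j' => (d.a j' < d.a i ∨ (d.a j' = d.a i ∧ j' < i)) ∨ j' = i)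
          = cnt d.n (fun j' => d.a j' < d.a i) + cnt d.n (fun j' => d.a j' = d.a i ∧ j' < i)
            + 1 := by
        rw [cnt_split (by intro j' _ _ hc; rcases hc with ⟨hc1 | hc1, rfl⟩ <;> omega),
          cnt_split (by intro j' _ _ hc; omega), cnt_single hi1 hi2]
      rw [← hsplit]
      apply cnt_le_cnt
      intro j' _ _ hP
      rcases hP with (hc | ⟨hc, _⟩) | rfl <;> omega
    have hE : (0:ℕ) ≤ cnt d.n (fun j' => d.a j' = d.a j ∧ j' < j) := Nat.zero_le _
    omega
  · have hA : cnt d.n (fun j' => shp d.X j' < d.a i) = cnt d.n (fun j' => shp d.X j' < d.a j) := by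
      apply cnt_congr; intro j' _ _; rw [h]
    have hB : cnt d.n (fun j' => d.a j' < d.a i) = cnt d.n (fun j' => d.a j' < d.a j) := by
      apply cnt_congr; intro j' _ _; rw [h]
    have hE : cnt d.n (fun j' => d.a j' = d.a i ∧ j' < i) + 1
        ≤ cnt d.n (fun j' => d.a j' = d.a j ∧ j' < j) := by
      have hsplit : cnt d.n (fun j' => (d.a j' = d.a i ∧ j' < i) ∨ j' = i)
          = cnt d.n (fun j' => d.a j' = d.a i ∧ j' < i) + 1 := by
        rw [cnt_split (by intro j' _ _ hc; omega), cnt_single hi1 hi2]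
      rw [← hsplit]
      apply cnt_le_cnt
      intro j' _ _ hP
      rcases hP with ⟨hc, hc'⟩ | rfl
      · exact ⟨by omega, by omega⟩
      · exact ⟨h, hij⟩
    omega

/-- Openers differ by at least 2 across an `a`-jump. -/
theorem mop_gap {i j : ℕ} (hi1 : 1 ≤ i) (hi2 : i ≤ d.n) (hj1 : 1 ≤ j)
    (hj2 : j ≤ d.n) (h : d.a j < d.a i) : d.mop j + 2 ≤ d.mop i := by
  rw [mop_eq d hi1 hi2, mop_eq d hj1 hj2]
  have hA : cnt d.n (fun j' => shp d.X j' < d.a j) < cnt d.n (fun j' => shp d.X j' < d.a i) := by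
    have haj : d.a j ≤ shp d.X d.n := (d.a_ub j hj1 hj2).trans (shp_mono d.X hj2)
    obtain ⟨l₀, hl₀1, hl₀2, hl₀⟩ := shp_surj (d.a_lb j hj1 hj2) haj
    exact cnt_lt_cnt (fun j' _ _ hP => lt_trans hP h) l₀ hl₀1 hl₀2 (by omega) (by omega)
  have hBE : cnt d.n (fun j' => d.a j' < d.a j)
      + cnt d.n (fun j' => d.a j' = d.a j ∧ j' < j) + 1
      ≤ cnt d.n (fun j' => d.a j' < d.a i) := by
    have hsplit : cnt d.n (fun j' => (d.a j' < d.a j ∨ (d.a j' = d.a j ∧ j' < j)) ∨ j' = j)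
        = cnt d.n (fun j' => d.a j' < d.a j) + cnt d.n (fun j' => d.a j' = d.a j ∧ j' < j)
          + 1 := by
      rw [cnt_split (by intro j' _ _ hc; rcases hc with ⟨hc1 | hc1, rfl⟩ <;> omega),
        cnt_split (by intro j' _ _ hc; omega), cnt_single hj1 hj2]
    rw [← hsplit]
    apply cnt_le_cnt
    intro j' _ _ hP
    rcases hP with (hc | ⟨hc, _⟩) | rfl <;> omega
  have hE : (0:ℕ) ≤ cnt d.n (fun j' => d.a j' = d.a i ∧ j' < i) := Nat.zero_le _
  omega

theorem mop_lt_iff {i j : ℕ} (hi1 : 1 ≤ i) (hi2 : i ≤ d.n) (hj1 : 1 ≤ j)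
    (hj2 : j ≤ d.n) :
    d.mop i < d.mop j ↔ (d.a i < d.a j ∨ (d.a i = d.a j ∧ i < j)) := by
  constructor
  · intro h
    rcases Nat.lt_trichotomy (d.a i) (d.a j) with h' | h' | h'
    · exact Or.inl h'
    · rcases Nat.lt_trichotomy i j with h'' | h'' | h''
      · exact Or.inr ⟨h', h''⟩
      · subst h''; omega
      · exact absurd (d.mop_lt_mop hj1 hj2 hi1 hi2 (Or.inr ⟨h'.symm, h''⟩)) (by omega)
    · exact absurd (d.mop_lt_mop hj1 hj2 hi1 hi2 (Or.inl h')) (by omega)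
  · exact d.mop_lt_mop hi1 hi2 hj1 hj2

theorem mop_inj {i j : ℕ} (hi1 : 1 ≤ i) (hi2 : i ≤ d.n) (hj1 : 1 ≤ j)
    (hj2 : j ≤ d.n) (h : d.mop i = d.mop j) : i = j := by
  by_contra hc
  rcases Nat.lt_trichotomy (d.a i) (d.a j) with h' | h' | h'
  · exact absurd h (ne_of_lt (d.mop_lt_mop hi1 hi2 hj1 hj2 (Or.inl h')))
  · rcases Nat.lt_trichotomy i j with h'' | h'' | h''
    · exact absurd h (ne_of_lt (d.mop_lt_mop hi1 hi2 hj1 hj2 (Or.inr ⟨h', h''⟩)))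
    · exact hc h''
    · exact absurd h.symm (ne_of_lt (d.mop_lt_mop hj1 hj2 hi1 hi2 (Or.inr ⟨h'.symm, h''⟩)))
  · exact absurd h.symm (ne_of_lt (d.mop_lt_mop hj1 hj2 hi1 hi2 (Or.inl h')))

theorem mcl_lt_mcl {i j : ℕ} (hi1 : 1 ≤ i) (hj2 : j ≤ d.n) (h : i < j) :
    d.mcl i < d.mcl j := by
  rw [mcl_eq d hi1 (by omega), mcl_eq d (by omega) hj2]
  have : cnt d.n (fun j' => d.a j' ≤ shp d.X i) ≤ cnt d.n (fun j' => d.a j' ≤ shp d.X j) :=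
    cnt_le_cnt (fun j' _ _ hP => hP.trans (shp_mono d.X (by omega)))
  omega

theorem mop_pos {i : ℕ} (h1 : 1 ≤ i) (h2 : i ≤ d.n) : 1 ≤ d.mop i := by
  rw [mop_eq d h1 h2]; omega

theorem mop_le {i : ℕ} (h1 : 1 ≤ i) (h2 : i ≤ d.n) : d.mop i ≤ 2 * d.n := by
  rw [mop_eq d h1 h2]
  have hA : cnt d.n (fun j => shp d.X j < d.a i) ≤ d.n := cnt_le_n _ _
  have hBE : cnt d.n (fun j => d.a j < d.a i) + cnt d.n (fun j => d.a j = d.a i ∧ j < i)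
      ≤ d.n - 1 := by
    rw [← cnt_split (by intro j' _ _ hc; omega)]
    exact cnt_le_pred h1 h2 (by omega)
  have := d.n_pos
  omega

theorem mcl_pos {i : ℕ} (h1 : 1 ≤ i) (h2 : i ≤ d.n) : 1 ≤ d.mcl i := by
  rw [mcl_eq d h1 h2]; omega

theorem mcl_le {i : ℕ} (h1 : 1 ≤ i) (h2 : i ≤ d.n) : d.mcl i ≤ 2 * d.n := by
  rw [mcl_eq d h1 h2]
  have := cnt_le_n d.n (fun j => d.a j ≤ shp d.X i)
  omega

theorem mop_lt_mcl_self {i : ℕ} (h1 : 1 ≤ i) (h2 : i ≤ d.n) : d.mop i < d.mcl i :=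
  d.mop_lt_mcl h1 h2 h1 h2 (d.a_ub i h1 h2)

theorem mop_ne_mcl {i j : ℕ} (hi1 : 1 ≤ i) (hi2 : i ≤ d.n) (hj1 : 1 ≤ j)
    (hj2 : j ≤ d.n) : d.mop i ≠ d.mcl j := by
  rcases le_or_gt (d.a i) (shp d.X j) with h | h
  · exact ne_of_lt (d.mop_lt_mcl hi1 hi2 hj1 hj2 h)
  · exact (ne_of_lt (d.mcl_lt_mop hi1 hi2 hj1 hj2 h)).symm

/-- The cover property for the constructed matching. -/
theorem mop_mcl_cover {m : ℕ} (hm1 : 1 ≤ m) (hm2 : m ≤ 2 * d.n) :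
    ∃ i, 1 ≤ i ∧ i ≤ d.n ∧ (d.mop i = m ∨ d.mcl i = m) := by
  classical
  have hOcard : ((Finset.Icc 1 d.n).image d.mop).card = d.n := by
    rw [Finset.card_image_of_injOn, Nat.card_Icc]
    · omega
    · intro i hi j hj hee
      rw [Finset.mem_coe, Finset.mem_Icc] at hi hj
      exact d.mop_inj hi.1 hi.2 hj.1 hj.2 hee
  have hCcard : ((Finset.Icc 1 d.n).image d.mcl).card = d.n := by
    rw [Finset.card_image_of_injOn, Nat.card_Icc]
    · omega
    · intro i hi j hj hee
      rw [Finset.mem_coe, Finset.mem_Icc] at hi hj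
      by_contra hc
      rcases Nat.lt_or_ge i j with h | h
      · exact absurd hee (ne_of_lt (d.mcl_lt_mcl hi.1 hj.2 h))
      · exact absurd hee.symm (ne_of_lt (d.mcl_lt_mcl hj.1 hi.2 (by omega)))
  have hdisj : Disjoint ((Finset.Icc 1 d.n).image d.mop)
      ((Finset.Icc 1 d.n).image d.mcl) := by
    rw [Finset.disjoint_left]
    rintro x hx hx'
    obtain ⟨i, hi, rfl⟩ := Finset.mem_image.mp hx
    obtain ⟨j, hj, hee⟩ := Finset.mem_image.mp hx'
    rw [Finset.mem_Icc] at hi hj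
    exact d.mop_ne_mcl hi.1 hi.2 hj.1 hj.2 hee.symm
  have hsub : ((Finset.Icc 1 d.n).image d.mop) ∪ ((Finset.Icc 1 d.n).image d.mcl)
      ⊆ Finset.Icc 1 (2 * d.n) := by
    intro x hx
    rw [Finset.mem_union] at hx
    rw [Finset.mem_Icc]
    rcases hx with hx | hx
    · obtain ⟨i, hi, rfl⟩ := Finset.mem_image.mp hx
      rw [Finset.mem_Icc] at hi
      exact ⟨d.mop_pos hi.1 hi.2, d.mop_le hi.1 hi.2⟩
    · obtain ⟨i, hi, rfl⟩ := Finset.mem_image.mp hx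
      rw [Finset.mem_Icc] at hi
      exact ⟨d.mcl_pos hi.1 hi.2, d.mcl_le hi.1 hi.2⟩
  have hcard : (Finset.Icc 1 (2 * d.n)).card ≤
      (((Finset.Icc 1 d.n).image d.mop) ∪ ((Finset.Icc 1 d.n).image d.mcl)).card := by
    rw [Finset.card_union_of_disjoint hdisj, hOcard, hCcard, Nat.card_Icc]
    omega
  have heq := Finset.eq_of_subset_of_card_le hsub hcard
  have hmem : m ∈ ((Finset.Icc 1 d.n).image d.mop) ∪ ((Finset.Icc 1 d.n).image d.mcl) := by
    rw [heq, Finset.mem_Icc]; exact ⟨hm1, hm2⟩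
  rw [Finset.mem_union] at hmem
  rcases hmem with hx | hx
  · obtain ⟨i, hi, hee⟩ := Finset.mem_image.mp hx
    rw [Finset.mem_Icc] at hi
    exact ⟨i, hi.1, hi.2, Or.inl hee⟩
  · obtain ⟨i, hi, hee⟩ := Finset.mem_image.mp hx
    rw [Finset.mem_Icc] at hi
    exact ⟨i, hi.1, hi.2, Or.inr hee⟩

end MData

namespace MData

variable (d : MData)

/-- The matching associated with the data `d`. -/
noncomputable def toMatching : Matching d.n where
  opener := d.mop
  closer := d.mcl
  opener_lt_closer := fun _ h1 h2 => d.mop_lt_mcl_self h1 h2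
  closer_mono := fun _ _ h1 hij hj => d.mcl_lt_mcl h1 hj hij
  opener_mem := fun _ h1 h2 => Set.mem_Icc.mpr ⟨d.mop_pos h1 h2, d.mop_le h1 h2⟩
  closer_mem := fun _ h1 h2 => Set.mem_Icc.mpr ⟨d.mcl_pos h1 h2, d.mcl_le h1 h2⟩
  opener_inj := fun _ _ hi1 hi2 hj1 hj2 h => d.mop_inj hi1 hi2 hj1 hj2 h
  opener_ne_closer := fun _ _ hi1 hi2 hj1 hj2 => d.mop_ne_mcl hi1 hi2 hj1 hj2
  cover := fun m hm => by
    rw [Set.mem_Icc] at hm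
    exact d.mop_mcl_cover hm.1 hm.2
  opener_eq_zero := fun i hi => by
    rw [Set.mem_Icc] at hi
    exact if_neg (by omega)
  closer_eq_zero := fun i hi => by
    rw [Set.mem_Icc] at hi
    exact if_neg (by omega)

theorem toMatching_opener : d.toMatching.opener = d.mop := rfl

theorem toMatching_closer : d.toMatching.closer = d.mcl := rfl

theorem mcl_lt_iff {i j : ℕ} (hi1 : 1 ≤ i) (hi2 : i ≤ d.n) (hj1 : 1 ≤ j)
    (hj2 : j ≤ d.n) : d.mcl i < d.mcl j ↔ i < j := by
  constructor
  · intro h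
    by_contra hc
    rcases Nat.lt_or_ge j i with h' | h'
    · exact absurd (d.mcl_lt_mcl hj1 hi2 h') (by omega)
    · have : i = j := by omega
      subst this; omega
  · exact fun h => d.mcl_lt_mcl hi1 hj2 h

theorem toMatching_nln : d.toMatching.NoLeftNesting := by
  rintro i j hi1 hi2 hj1 hj2 ⟨hop, hcl⟩
  simp only [toMatching_opener, toMatching_closer] at hop hcl
  have hij : i < j := (d.mcl_lt_iff hi1 hi2 hj1 hj2).mp hcl
  have h1 : d.mop j < d.mop i := by omega
  rw [d.mop_lt_iff hj1 hj2 hi1 hi2] at h1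
  rcases h1 with h | ⟨_, h⟩
  · have := d.mop_gap hi1 hi2 hj1 hj2 h
    omega
  · omega

theorem mcl_adj {x : ℕ} (hx : x ∈ d.X) : d.mcl x = d.mcl (x - 1) + 1 := by
  have hx2 := d.X_sub hx
  rw [Set.mem_Icc] at hx2
  have he : x - 1 + 1 = x := by omega
  have hshp : shp d.X x = shp d.X (x - 1) := by
    rw [← he]
    exact shp_succ_mem (by rw [he]; exact hx)
  rw [d.mcl_eq (by omega) hx2.2, d.mcl_eq (by omega : 1 ≤ x - 1) (by omega), hshp]
  omega

theorem toMatching_radj : d.X ⊆ d.toMatching.RadjSet := by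
  intro x hx
  have hx2 := d.X_sub hx
  rw [Set.mem_Icc] at hx2
  exact ⟨hx2.1, hx2.2, d.mcl_adj hx⟩

/-- The marked matching associated with the data `d`. -/
noncomputable def toMarked : MarkedMatching where
  n := d.n
  n_pos := d.n_pos
  M := d.toMatching
  noLeftNesting := d.toMatching_nln
  X := d.X
  X_subset := d.toMatching_radj

theorem toMarked_n : d.toMarked.n = d.n := rfl
theorem toMarked_X : d.toMarked.X = d.X := rfl
theorem toMarked_M : d.toMarked.M = d.toMatching := rfl

/-- Characterization of `mop i = mop (i-1) + 1` for `i ∈ [2,n]`. -/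
theorem mop_adj_iff {i : ℕ} (hi1 : 2 ≤ i) (hi2 : i ≤ d.n) :
    d.mop i = d.mop (i - 1) + 1 ↔ d.a i = d.a (i - 1) := by
  have he : i - 1 + 1 = i := by omega
  constructor
  · intro h
    have h1 : d.mop (i - 1) < d.mop i := by omega
    rw [d.mop_lt_iff (by omega) (by omega) (by omega) hi2] at h1
    rcases h1 with h' | ⟨h', _⟩
    · exfalso
      have := d.mop_gap (by omega : 1 ≤ i) hi2 (by omega : 1 ≤ i - 1) (by omega) h'
      omega
    · exact h'.symm
  · intro h
    rw [d.mop_eq (by omega : 1 ≤ i) hi2, d.mop_eq (by omega : 1 ≤ i - 1) (by omega)]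
    have hA : cnt d.n (fun j => shp d.X j < d.a i) = cnt d.n (fun j => shp d.X j < d.a (i-1)) := by
      apply cnt_congr; intro j _ _; rw [h]
    have hB : cnt d.n (fun j => d.a j < d.a i) = cnt d.n (fun j => d.a j < d.a (i-1)) := by
      apply cnt_congr; intro j _ _; rw [h]
    have hE : cnt d.n (fun j => d.a j = d.a i ∧ j < i)
        = cnt d.n (fun j => d.a j = d.a (i-1) ∧ j < i - 1) + 1 := by
      have hc : cnt d.n (fun j => d.a j = d.a i ∧ j < i)
          = cnt d.n (fun j => (d.a j = d.a (i-1) ∧ j < i - 1) ∨ j = i - 1) := by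
        apply cnt_congr
        intro j _ _
        constructor
        · rintro ⟨ha, hlt⟩
          rcases Nat.lt_or_ge j (i-1) with h' | h'
          · exact Or.inl ⟨by omega, h'⟩
          · exact Or.inr (by omega)
        · rintro (⟨ha, hlt⟩ | rfl)
          · exact ⟨by omega, by omega⟩
          · exact ⟨h.symm, by omega⟩
      rw [hc, cnt_split (by rintro j _ _ ⟨⟨_, hlt⟩, rfl⟩; omega),
        cnt_single (by omega : 1 ≤ i - 1) (by omega)]
    omega

/-- `Min` of the associated matching. -/
theorem toMatching_min :
    d.toMatching.MinSet = {i | 1 ≤ i ∧ i ≤ d.n ∧ d.a i = 1} := by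
  ext i
  simp only [Matching.MinSet, Set.mem_setOf_eq, toMatching_opener, toMatching_closer]
  constructor
  · rintro ⟨h1, h2, hlt⟩
    refine ⟨h1, h2, ?_⟩
    by_contra hc
    have ha1 := d.a_lb i h1 h2
    have hshp1 : shp d.X 1 = 1 := shp_one d.one_not_mem
    have := d.mcl_lt_mop h1 h2 (le_refl 1) d.n_pos (by omega)
    omega
  · rintro ⟨h1, h2, ha⟩
    refine ⟨h1, h2, ?_⟩
    have hshp1 : shp d.X 1 = 1 := shp_one d.one_not_mem
    exact d.mop_lt_mcl h1 h2 (le_refl 1) d.n_pos (by omega)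

/-- `Rne ∩ X` of the associated matching. -/
theorem toMatching_rne :
    d.toMatching.RneSet ∩ d.X = {i | i ∈ d.X ∧ d.a i < d.a (i - 1)} := by
  ext i
  simp only [Matching.RneSet, Set.mem_inter_iff, Set.mem_setOf_eq,
    toMatching_opener, toMatching_closer]
  constructor
  · rintro ⟨⟨h1, h2, hop, _⟩, hX⟩
    refine ⟨hX, ?_⟩
    rw [d.mop_lt_iff (by omega) h2 (by omega) (by omega)] at hop
    rcases hop with h | ⟨_, h⟩
    · exact h
    · omega
  · rintro ⟨hX, ha⟩
    have hx2 := d.X_sub hX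
    rw [Set.mem_Icc] at hx2
    refine ⟨⟨hx2.1, hx2.2, ?_, d.mcl_adj hX⟩, hX⟩
    exact d.mop_lt_mop (by omega) hx2.2 (by omega) (by omega) (Or.inl ha)

/-- `LRcr ∩ X` of the associated matching. -/
theorem toMatching_lrcr :
    d.toMatching.LRcrSet ∩ d.X = {i | i ∈ d.X ∧ d.a i = d.a (i - 1)} := by
  ext i
  simp only [Matching.LRcrSet, Matching.RcrSet, Set.mem_inter_iff, Set.mem_setOf_eq,
    toMatching_opener, toMatching_closer]
  constructor
  · rintro ⟨⟨⟨h1, h2, _, _, _⟩, hop⟩, hX⟩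
    exact ⟨hX, (d.mop_adj_iff h1 h2).mp hop⟩
  · rintro ⟨hX, ha⟩
    have hx2 := d.X_sub hX
    rw [Set.mem_Icc] at hx2
    have hadj := (d.mop_adj_iff hx2.1 hx2.2).mpr ha
    refine ⟨⟨⟨hx2.1, hx2.2, by omega, ?_, d.mcl_adj hX⟩, hadj⟩, hX⟩
    -- mop i < mcl (i-1)
    have hub := d.a_ub (i-1) (by omega) (by omega)
    exact d.mop_lt_mcl (by omega) hx2.2 (by omega) (by omega) (by omega)

/-- `Rcr' ∩ X` of the associated matching. -/
theorem toMatching_rcrp :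
    d.toMatching.RcrpSet ∩ d.X = {i | i ∈ d.X ∧ d.a (i - 1) < d.a i} := by
  ext i
  simp only [Matching.RcrpSet, Matching.LRcrSet, Matching.RcrSet, Set.mem_inter_iff,
    Set.mem_diff, Set.mem_setOf_eq, toMatching_opener, toMatching_closer]
  constructor
  · rintro ⟨⟨⟨h1, h2, hop, hop2, hcl⟩, hnot⟩, hX⟩
    refine ⟨hX, ?_⟩
    have hop' := hop
    rw [d.mop_lt_iff (by omega) (by omega) (by omega) h2] at hop'
    rcases hop' with h | ⟨h, _⟩
    · exact h
    · exact absurd ⟨⟨h1, h2, hop, hop2, hcl⟩, (d.mop_adj_iff h1 h2).mpr h.symm⟩ hnot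
  · rintro ⟨hX, ha⟩
    have hx2 := d.X_sub hX
    rw [Set.mem_Icc] at hx2
    have he : i - 1 + 1 = i := by omega
    have hshp : shp d.X i = shp d.X (i - 1) := by
      rw [← he]
      exact shp_succ_mem (by rw [he]; exact hX)
    have hub := d.a_ub i (by omega) hx2.2
    refine ⟨⟨⟨hx2.1, hx2.2, ?_, ?_, d.mcl_adj hX⟩, ?_⟩, hX⟩
    · exact d.mop_lt_mop (by omega) (by omega) (by omega) hx2.2 (Or.inl ha)
    · exact d.mop_lt_mcl (by omega) hx2.2 (by omega) (by omega) (by omega)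
    · rintro ⟨-, hadj⟩
      rw [d.mop_adj_iff hx2.1 hx2.2] at hadj
      omega

end MData

/-! ## From marked matchings to data -/

namespace MarkedMatching

variable (m : MarkedMatching)

theorem X_sub_Icc : m.X ⊆ Set.Icc 2 m.n := by
  intro x hx
  have := m.X_subset hx
  exact Set.mem_Icc.mpr ⟨this.1, this.2.1⟩

theorem one_not_mem_X : 1 ∉ m.X := by
  intro h
  have := m.X_sub_Icc h
  rw [Set.mem_Icc] at this
  omega

theorem n_succ_not_mem_X {l : ℕ} (h : m.n ≤ l) : l + 1 ∉ m.X := by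
  intro hx
  have := m.X_sub_Icc hx
  rw [Set.mem_Icc] at this
  omega

theorem cl_lt_iff {i j : ℕ} (hi1 : 1 ≤ i) (hi2 : i ≤ m.n) (hj1 : 1 ≤ j)
    (hj2 : j ≤ m.n) : m.M.closer i < m.M.closer j ↔ i < j := by
  constructor
  · intro h
    by_contra hc
    rcases Nat.lt_or_ge j i with h' | h'
    · exact absurd (m.M.closer_mono j i hj1 h' hi2) (by omega)
    · have : i = j := by omega
      subst this; omega
  · exact fun h => m.M.closer_mono i j hi1 h hj2

theorem cl_le_of_le {i j : ℕ} (hi1 : 1 ≤ i) (hj2 : j ≤ m.n) (h : i ≤ j) :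
    m.M.closer i ≤ m.M.closer j := by
  rcases Nat.eq_or_lt_of_le h with h' | h'
  · subst h'; rfl
  · exact le_of_lt (m.M.closer_mono i j hi1 h' hj2)

theorem be_exists (s : ℕ) : ∃ l, s ≤ l ∧ l + 1 ∉ m.X :=
  ⟨max s m.n, le_max_left _ _, m.n_succ_not_mem_X (le_max_right _ _)⟩

open Classical in
/-- The end of the `X`-block containing `s`. -/
noncomputable def be (s : ℕ) : ℕ := Nat.find (m.be_exists s)

open Classical in
theorem be_ge (s : ℕ) : s ≤ m.be s := (Nat.find_spec (m.be_exists s)).1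

open Classical in
theorem be_succ_not_mem (s : ℕ) : m.be s + 1 ∉ m.X := (Nat.find_spec (m.be_exists s)).2

open Classical in
theorem be_le {s : ℕ} (hs : s ≤ m.n) : m.be s ≤ m.n :=
  Nat.find_le ⟨hs, m.n_succ_not_mem_X le_rfl⟩

open Classical in
theorem be_mem {s u : ℕ} (h1 : s < u) (h2 : u ≤ m.be s) : u ∈ m.X := by
  by_contra hc
  have h2' : u ≤ Nat.find (m.be_exists s) := h2
  have hmin := Nat.find_min (m.be_exists s) (show u - 1 < Nat.find (m.be_exists s) by omega)
  push_neg at hmin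
  have hu := hmin (by omega)
  rw [show u - 1 + 1 = u by omega] at hu
  exact hc hu

theorem cl_mem_X {x : ℕ} (hx : x ∈ m.X) : m.M.closer x = m.M.closer (x - 1) + 1 :=
  (m.X_subset hx).2.2

theorem cl_block {s : ℕ} (hs1 : 1 ≤ s) (hs2 : s ≤ m.n) :
    ∀ k, s + k ≤ m.be s → m.M.closer (s + k) = m.M.closer s + k := by
  intro k
  induction k with
  | zero => intro _; rfl
  | succ k ih =>
    intro h
    have hmem : s + k + 1 ∈ m.X := m.be_mem (s := s) (by omega) (by omega)
    have hthis := m.cl_mem_X hmem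
    have he : s + k + 1 - 1 = s + k := by omega
    rw [he] at hthis
    have hih := ih (by omega)
    rw [show s + (k+1) = s + k + 1 from rfl, hthis, hih]
    omega

theorem no_opener_in_run {s j : ℕ} (hs1 : 1 ≤ s) (hs2 : s ≤ m.n) (hj1 : 1 ≤ j)
    (hj2 : j ≤ m.n) :
    ¬(m.M.closer s ≤ m.M.opener j ∧ m.M.opener j ≤ m.M.closer (m.be s)) := by
  rintro ⟨h1, h2⟩
  have hbe := m.be_ge s
  have hben := m.be_le hs2
  have hblock := m.cl_block hs1 hs2 (m.be s - s) (by omega)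
  rw [show s + (m.be s - s) = m.be s by omega] at hblock
  have hk : m.M.opener j - m.M.closer s ≤ m.be s - s := by omega
  have := m.cl_block hs1 hs2 (m.M.opener j - m.M.closer s) (by omega)
  exact m.M.opener_ne_closer j (s + (m.M.opener j - m.M.closer s)) hj1 hj2
    (by omega) (by omega) (by omega)

theorem opener_separates {s j : ℕ} (hs1 : 1 ≤ s) (hs2 : s ≤ m.n) (hj1 : 1 ≤ j)
    (hj2 : j ≤ m.n) :
    m.M.opener j < m.M.closer s ∨ m.M.closer (m.be s) < m.M.opener j := by
  have := m.no_opener_in_run hs1 hs2 hj1 hj2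
  omega

/-- The dot-row statistic of arc `i`: one plus the number of blocks fully closed
before the opener of arc `i`. -/
noncomputable def ma (i : ℕ) : ℕ :=
  if 1 ≤ i ∧ i ≤ m.n then
    1 + cnt m.n (fun j => m.M.closer j < m.M.opener i ∧ j + 1 ∉ m.X)
  else 0

theorem ma_eq {i : ℕ} (h1 : 1 ≤ i) (h2 : i ≤ m.n) :
    m.ma i = 1 + cnt m.n (fun j => m.M.closer j < m.M.opener i ∧ j + 1 ∉ m.X) :=
  if_pos ⟨h1, h2⟩

theorem shp_split (X : Set ℕ) (h1 : 1 ∉ X) {j : ℕ} (hj : 1 ≤ j) :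
    shp X j = cnt j (fun v => v ∉ X ∧ 2 ≤ v) + 1 := by
  rw [shp]
  have hc : cnt j (fun v => v ∉ X) = cnt j (fun v => (v ∉ X ∧ 2 ≤ v) ∨ v = 1) := by
    apply cnt_congr
    intro v hv1 hv2
    constructor
    · intro h
      rcases Nat.lt_or_ge v 2 with h' | h'
      · exact Or.inr (by omega)
      · exact Or.inl ⟨h, h'⟩
    · rintro (⟨h, _⟩ | rfl)
      · exact h
      · exact h1
  rw [hc, cnt_split (by rintro v _ _ ⟨⟨_, h2⟩, rfl⟩; omega), cnt_single le_rfl hj]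

/-- Key equivalence: `opener i < closer j ↔ ma i ≤ shp X j`. -/
theorem op_lt_cl_iff {i j : ℕ} (hi1 : 1 ≤ i) (hi2 : i ≤ m.n) (hj1 : 1 ≤ j)
    (hj2 : j ≤ m.n) :
    m.M.opener i < m.M.closer j ↔ m.ma i ≤ shp m.X j := by
  constructor
  · intro h
    rw [m.ma_eq hi1 hi2, shp_split m.X m.one_not_mem_X hj1]
    have hle : cnt m.n (fun l => m.M.closer l < m.M.opener i ∧ l + 1 ∉ m.X)
        ≤ cnt j (fun v => v ∉ m.X ∧ 2 ≤ v) := by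
      apply cnt_le_cnt_of_inj (fun l => l + 1)
      · intro l hl1 hl2 hP
        have hlj : l < j := by
          rw [← m.cl_lt_iff hl1 hl2 hj1 hj2]
          omega
        exact ⟨⟨by omega, by omega⟩, hP.2, by omega⟩
      · intro l l' _ _ _ _ _ _ h
        omega
    omega
  · intro h
    by_contra hc
    have hne := m.M.opener_ne_closer i j hi1 hi2 hj1 hj2
    have hgt : m.M.closer j < m.M.opener i := by omega
    have hge : shp m.X j ≤ cnt m.n (fun l => m.M.closer l < m.M.opener i ∧ l + 1 ∉ m.X) := by
      rw [shp]
      apply cnt_le_cnt_of_inj (fun s => m.be s)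
      · intro s hs1 hs2 hP
        have hsn : s ≤ m.n := hs2.trans hj2
        refine ⟨⟨(m.be_ge s).trans' hs1, m.be_le hsn⟩, ?_, m.be_succ_not_mem s⟩
        rcases m.opener_separates hs1 hsn hi1 hi2 with h' | h'
        · have : m.M.closer s ≤ m.M.closer j := m.cl_le_of_le hs1 hj2 hs2
          omega
        · exact h'
      · intro s s' hs1 hs2 _ hs'1 hs'2 _ hee
        by_contra hne'
        rcases Nat.lt_or_ge s s' with h' | h'
        · have : s' ∈ m.X := m.be_mem h' (by rw [hee]; exact m.be_ge s')
          exact absurd this ‹s' ∉ m.X›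
        · have h'' : s' < s := by omega
          have : s ∈ m.X := m.be_mem h'' (by rw [← hee]; exact m.be_ge s)
          exact absurd this ‹s ∉ m.X›
    rw [m.ma_eq hi1 hi2] at h
    omega

/-- Position counting: every position `< p` is an opener or a closer. -/
theorem pos_count {p : ℕ} (hp : p ≤ 2 * m.n + 1) :
    p - 1 = cnt m.n (fun j => m.M.closer j < p) + cnt m.n (fun j => m.M.opener j < p) := by
  classical
  have hsets : Finset.Icc 1 (p - 1)
      = ((cset m.n (fun j => m.M.closer j < p)).image m.M.closer)
        ∪ ((cset m.n (fun j => m.M.opener j < p)).image m.M.opener) := by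
    ext q
    rw [Finset.mem_Icc, Finset.mem_union, Finset.mem_image, Finset.mem_image]
    constructor
    · rintro ⟨hq1, hq2⟩
      obtain ⟨i, hi1, hi2, hor⟩ := m.M.cover q (Set.mem_Icc.mpr ⟨hq1, by omega⟩)
      rcases hor with h | h
      · exact Or.inr ⟨i, mem_cset.mpr ⟨⟨hi1, hi2⟩, by omega⟩, h⟩
      · exact Or.inl ⟨i, mem_cset.mpr ⟨⟨hi1, hi2⟩, by omega⟩, h⟩
    · rintro (⟨i, hi, rfl⟩ | ⟨i, hi, rfl⟩)
      · rw [mem_cset] at hi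
        have := m.M.closer_mem i hi.1.1 hi.1.2
        rw [Set.mem_Icc] at this
        exact ⟨this.1, by omega⟩
      · rw [mem_cset] at hi
        have := m.M.opener_mem i hi.1.1 hi.1.2
        rw [Set.mem_Icc] at this
        exact ⟨this.1, by omega⟩
  have hcard := congrArg Finset.card hsets
  rw [Nat.card_Icc, Finset.card_union_of_disjoint, Finset.card_image_of_injOn,
    Finset.card_image_of_injOn] at hcard
  · rw [cnt, cnt]
    omega
  · intro a ha b hb hee
    rw [Finset.mem_coe, mem_cset] at ha hb
    exact m.M.opener_inj a b ha.1.1 ha.1.2 hb.1.1 hb.1.2 hee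
  · intro a ha b hb hee
    rw [Finset.mem_coe, mem_cset] at ha hb
    by_contra hne
    rcases Nat.lt_or_ge a b with h | h
    · exact absurd hee (ne_of_lt (m.M.closer_mono a b ha.1.1 h hb.1.2))
    · exact absurd hee.symm (ne_of_lt (m.M.closer_mono b a hb.1.1 (by omega) ha.1.2))
  · rw [Finset.disjoint_left]
    rintro q hq hq'
    obtain ⟨a, ha, rfl⟩ := Finset.mem_image.mp hq
    obtain ⟨b, hb, hee⟩ := Finset.mem_image.mp hq'
    rw [mem_cset] at ha hb
    exact m.M.opener_ne_closer b a hb.1.1 hb.1.2 ha.1.1 ha.1.2 hee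

/-- The closer formula. -/
theorem cl_formula {i : ℕ} (hi1 : 1 ≤ i) (hi2 : i ≤ m.n) :
    m.M.closer i = i + cnt m.n (fun j => m.ma j ≤ shp m.X i) := by
  have hcl := m.M.closer_mem i hi1 hi2
  rw [Set.mem_Icc] at hcl
  have hpos := m.pos_count (p := m.M.closer i) (by omega)
  have h1 : cnt m.n (fun j => m.ma j ≤ shp m.X i)
      = cnt m.n (fun j => m.M.opener j < m.M.closer i) := by
    apply cnt_congr
    intro j hj1 hj2
    exact (m.op_lt_cl_iff hj1 hj2 hi1 hi2).symm
  have h2 : cnt m.n (fun j => m.M.closer j < m.M.closer i)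
      = cnt m.n (fun j => j ≤ i - 1) := by
    apply cnt_congr
    intro j hj1 hj2
    rw [m.cl_lt_iff hj1 hj2 hi1 hi2]
    omega
  rw [h2, cnt_le_val (by omega : i - 1 ≤ m.n)] at hpos
  rw [h1]
  omega

/-- Opener order, part 1: smaller `ma` means smaller opener. -/
theorem op_lt_of_ma_lt {i j : ℕ} (hi1 : 1 ≤ i) (hi2 : i ≤ m.n) (hj1 : 1 ≤ j)
    (hj2 : j ≤ m.n) (h : m.ma i < m.ma j) : m.M.opener i < m.M.opener j := by
  by_contra hc
  have hne : i ≠ j := by intro he; subst he; omega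
  have h' : m.M.opener j < m.M.opener i := by
    rcases Nat.lt_or_ge (m.M.opener j) (m.M.opener i) with h' | h'
    · exact h'
    · exact absurd (m.M.opener_inj i j hi1 hi2 hj1 hj2 (by omega)) hne
  have : m.ma j ≤ m.ma i := by
    rw [m.ma_eq hi1 hi2, m.ma_eq hj1 hj2]
    have := cnt_le_cnt (n := m.n)
      (P := fun l => m.M.closer l < m.M.opener j ∧ l + 1 ∉ m.X)
      (Q := fun l => m.M.closer l < m.M.opener i ∧ l + 1 ∉ m.X)
      (fun l _ _ hP => ⟨by omega, hP.2⟩)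
    omega
  omega

/-- Opener order, part 2: equal `ma`, then openers sorted by index. -/
theorem op_lt_of_ma_eq {i j : ℕ} (hi1 : 1 ≤ i) (hi2 : i ≤ m.n) (hj1 : 1 ≤ j)
    (hj2 : j ≤ m.n) (hma : m.ma i = m.ma j) (hij : i < j) :
    m.M.opener i < m.M.opener j := by
  by_contra hc
  have hne : i ≠ j := by omega
  have hlt : m.M.opener j < m.M.opener i := by
    rcases Nat.lt_or_ge (m.M.opener j) (m.M.opener i) with h' | h'
    · exact h'
    · exact absurd (m.M.opener_inj i j hi1 hi2 hj1 hj2 (by omega)) hne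
  -- no closer strictly between the two openers
  have hnoclos : ∀ l, 1 ≤ l → l ≤ m.n →
      ¬(m.M.opener j < m.M.closer l ∧ m.M.closer l < m.M.opener i) := by
    rintro l hl1 hl2 ⟨ha, hb⟩
    have hsep := m.opener_separates hl1 hl2 hi1 hi2
    have hbel : m.M.closer l ≤ m.M.closer (m.be l) :=
      m.cl_le_of_le hl1 (m.be_le hl2) (m.be_ge l)
    have hbe_lt : m.M.closer (m.be l) < m.M.opener i := by omega
    have hstrict : m.ma j < m.ma i := by
      rw [m.ma_eq hi1 hi2, m.ma_eq hj1 hj2]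
      have := cnt_lt_cnt (n := m.n)
        (P := fun l' => m.M.closer l' < m.M.opener j ∧ l' + 1 ∉ m.X)
        (Q := fun l' => m.M.closer l' < m.M.opener i ∧ l' + 1 ∉ m.X)
        (fun l' _ _ hP => ⟨by omega, hP.2⟩)
        (m.be l) (hl1.trans (m.be_ge l)) (m.be_le hl2)
        ⟨hbe_lt, m.be_succ_not_mem l⟩ (by push_neg; intro hcl; omega)
      omega
    omega
  -- all positions in [opener j, opener i] are openers; run induction
  have hopi := m.M.opener_mem i hi1 hi2
  rw [Set.mem_Icc] at hopi
  have hrun : ∀ k, k ≤ m.M.opener i - m.M.opener j →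
      ∃ l, 1 ≤ l ∧ l ≤ m.n ∧ m.M.opener l = m.M.opener j + k ∧
        m.M.closer j ≤ m.M.closer l := by
    intro k
    induction k with
    | zero => exact fun _ => ⟨j, hj1, hj2, by omega, le_rfl⟩
    | succ k ih =>
      intro hk
      obtain ⟨l, hl1, hl2, hlop, hlcl⟩ := ih (by omega)
      have hpmem : m.M.opener j + k + 1 ∈ Set.Icc 1 (2 * m.n) := by
        rw [Set.mem_Icc]
        omega
      obtain ⟨l', hl'1, hl'2, hor⟩ := m.M.cover _ hpmem
      rcases hor with hop | hcl'
      · -- an opener adjacent to opener l: no left nesting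
        have hnl := m.noLeftNesting l' l hl'1 hl'2 hl1 hl2
        push_neg at hnl
        have hcll : m.M.closer l ≤ m.M.closer l' := hnl (by omega)
        have hne' : l ≠ l' := by
          intro he
          subst he
          omega
        have : m.M.closer l ≠ m.M.closer l' := by
          intro he
          rcases Nat.lt_or_ge l l' with h' | h'
          · exact absurd he (ne_of_lt (m.M.closer_mono l l' hl1 h' hl'2))
          · exact absurd he.symm (ne_of_lt (m.M.closer_mono l' l hl'1 (by omega) hl2))
        exact ⟨l', hl'1, hl'2, by omega, by omega⟩
      · -- a closer strictly between the openers: impossible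
        exfalso
        rcases Nat.lt_or_ge (m.M.opener j + k + 1) (m.M.opener i) with h' | h'
        · exact hnoclos l' hl'1 hl'2 ⟨by omega, by omega⟩
        · have : m.M.opener j + k + 1 = m.M.opener i := by omega
          exact m.M.opener_ne_closer i l' hi1 hi2 hl'1 hl'2 (by omega)
  obtain ⟨l, hl1, hl2, hlop, hlcl⟩ := hrun (m.M.opener i - m.M.opener j) le_rfl
  have hli : l = i := m.M.opener_inj l i hl1 hl2 hi1 hi2 (by omega)
  rw [hli] at hlcl
  have := m.M.closer_mono i j hi1 hij hj2
  omega

theorem op_lt_iff {i j : ℕ} (hi1 : 1 ≤ i) (hi2 : i ≤ m.n) (hj1 : 1 ≤ j)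
    (hj2 : j ≤ m.n) :
    m.M.opener i < m.M.opener j ↔ (m.ma i < m.ma j ∨ (m.ma i = m.ma j ∧ i < j)) := by
  constructor
  · intro h
    rcases Nat.lt_trichotomy (m.ma i) (m.ma j) with h' | h' | h'
    · exact Or.inl h'
    · rcases Nat.lt_trichotomy i j with h'' | h'' | h''
      · exact Or.inr ⟨h', h''⟩
      · subst h''; omega
      · exact absurd (m.op_lt_of_ma_eq hj1 hj2 hi1 hi2 h'.symm h'') (by omega)
    · exact absurd (m.op_lt_of_ma_lt hj1 hj2 hi1 hi2 h') (by omega)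
  · rintro (h | ⟨h, h'⟩)
    · exact m.op_lt_of_ma_lt hi1 hi2 hj1 hj2 h
    · exact m.op_lt_of_ma_eq hi1 hi2 hj1 hj2 h h'

/-- The opener formula. -/
theorem op_formula {i : ℕ} (hi1 : 1 ≤ i) (hi2 : i ≤ m.n) :
    m.M.opener i = 1 + cnt m.n (fun j => shp m.X j < m.ma i)
      + cnt m.n (fun j => m.ma j < m.ma i)
      + cnt m.n (fun j => m.ma j = m.ma i ∧ j < i) := by
  have hop := m.M.opener_mem i hi1 hi2
  rw [Set.mem_Icc] at hop
  have hpos := m.pos_count (p := m.M.opener i) (by omega)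
  have h1 : cnt m.n (fun j => m.M.closer j < m.M.opener i)
      = cnt m.n (fun j => shp m.X j < m.ma i) := by
    apply cnt_congr
    intro j hj1 hj2
    have hiff := m.op_lt_cl_iff hi1 hi2 hj1 hj2
    have hne := m.M.opener_ne_closer i j hi1 hi2 hj1 hj2
    omega
  have h2 : cnt m.n (fun j => m.M.opener j < m.M.opener i)
      = cnt m.n (fun j => m.ma j < m.ma i) + cnt m.n (fun j => m.ma j = m.ma i ∧ j < i) := by
    rw [← cnt_split (by rintro j _ _ ⟨hP, hQ, _⟩; omega)]
    apply cnt_congr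
    intro j hj1 hj2
    exact m.op_lt_iff hj1 hj2 hi1 hi2
  rw [h1, h2] at hpos
  omega

theorem ma_lb {i : ℕ} (h1 : 1 ≤ i) (h2 : i ≤ m.n) : 1 ≤ m.ma i := by
  rw [m.ma_eq h1 h2]; omega

theorem ma_ub {i : ℕ} (h1 : 1 ≤ i) (h2 : i ≤ m.n) : m.ma i ≤ shp m.X i :=
  (m.op_lt_cl_iff h1 h2 h1 h2).mp (m.M.opener_lt_closer i h1 h2)

/-- The data associated with a marked matching. -/
noncomputable def toData : MData where
  n := m.n
  X := m.X
  a := m.ma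
  n_pos := m.n_pos
  X_sub := m.X_sub_Icc
  a_lb := fun i h1 h2 => m.ma_lb h1 h2
  a_ub := fun i h1 h2 => m.ma_ub h1 h2
  a_zero := fun i hi => by
    rw [Set.mem_Icc] at hi
    exact if_neg (by omega)

theorem toData_n : m.toData.n = m.n := rfl
theorem toData_X : m.toData.X = m.X := rfl
theorem toData_a : m.toData.a = m.ma := rfl

end MarkedMatching

/-! ## Round trips between data and marked matchings -/

theorem Matching.ext'' {n : ℕ} {M M' : Matching n}
    (ho : ∀ i, M.opener i = M'.opener i) (hc : ∀ i, M.closer i = M'.closer i) :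
    M = M' := by
  have ho' : M.opener = M'.opener := funext ho
  have hc' : M.closer = M'.closer := funext hc
  cases M; cases M'
  dsimp at ho' hc'
  subst ho'; subst hc'
  rfl

theorem MarkedMatching.ext' {A B : MarkedMatching} (hn : A.n = B.n)
    (ho : ∀ i, A.M.opener i = B.M.opener i) (hc : ∀ i, A.M.closer i = B.M.closer i)
    (hX : A.X = B.X) : A = B := by
  obtain ⟨n₁, p₁, M₁, nl₁, X₁, xs₁⟩ := A
  obtain ⟨n₂, p₂, M₂, nl₂, X₂, xs₂⟩ := B
  dsimp at hn ho hc hX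
  subst hn; subst hX
  have hM : M₁ = M₂ := Matching.ext'' ho hc
  subst hM
  rfl

theorem MData.toMarked_toData (d : MData) : d.toMarked.toData = d := by
  apply MData.ext'
  · rfl
  · rfl
  funext i
  rw [MarkedMatching.toData_a]
  by_cases hi : 1 ≤ i ∧ i ≤ d.n
  · rw [d.toMarked.ma_eq hi.1 hi.2]
    simp only [MData.toMarked_n, MData.toMarked_X, MData.toMarked_M,
      MData.toMatching_opener, MData.toMatching_closer]
    have hcongr : cnt d.n (fun j => d.mcl j < d.mop i ∧ j + 1 ∉ d.X)
        = cnt d.n (fun j => shp d.X j ≤ d.a i - 1 ∧ j + 1 ∉ d.X) := by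
      apply cnt_congr
      intro j hj1 hj2
      constructor
      · rintro ⟨hlt, hend⟩
        refine ⟨?_, hend⟩
        by_contra hc
        have := d.mop_lt_mcl hi.1 hi.2 hj1 hj2 (by omega)
        omega
      · rintro ⟨hle, hend⟩
        have ha1 := d.a_lb i hi.1 hi.2
        exact ⟨d.mcl_lt_mop hi.1 hi.2 hj1 hj2 (by omega), hend⟩
    rw [hcongr]
    have ha1 := d.a_lb i hi.1 hi.2
    have ha2 := (d.a_ub i hi.1 hi.2).trans (shp_mono d.X hi.2)
    rw [cnt_block_ends d.one_not_mem (by omega : d.a i - 1 < shp d.X d.n)]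
    omega
  · rw [d.a_zero i (by rw [Set.mem_Icc]; omega)]
    rw [MarkedMatching.ma, if_neg (by simp only [MData.toMarked_n]; omega)]

theorem MarkedMatching.toMarked_toData (m : MarkedMatching) : m.toData.toMarked = m := by
  apply MarkedMatching.ext'
  · rfl
  case hX => rfl
  · intro i
    show m.toData.mop i = m.M.opener i
    by_cases hi : 1 ≤ i ∧ i ≤ m.n
    · rw [MData.mop_eq _ hi.1 hi.2]
      simp only [MarkedMatching.toData_n, MarkedMatching.toData_X, MarkedMatching.toData_a]
      rw [m.op_formula hi.1 hi.2]
    · rw [m.M.opener_eq_zero i (by rw [Set.mem_Icc]; omega), MData.mop,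
        if_neg (by simp only [MarkedMatching.toData_n]; omega)]
  · intro i
    show m.toData.mcl i = m.M.closer i
    by_cases hi : 1 ≤ i ∧ i ≤ m.n
    · rw [MData.mcl_eq _ hi.1 hi.2]
      simp only [MarkedMatching.toData_n, MarkedMatching.toData_X, MarkedMatching.toData_a]
      rw [m.cl_formula hi.1 hi.2]
    · rw [m.M.closer_eq_zero i (by rw [Set.mem_Icc]; omega), MData.mcl,
        if_neg (by simp only [MarkedMatching.toData_n]; omega)]

/-! ## Fillings and data -/

theorem ncard_Icc_nat (a b : ℕ) : (Set.Icc a b).ncard = b + 1 - a := by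
  rw [← Finset.coe_Icc, Set.ncard_coe_finset, Nat.card_Icc]

theorem Filling.ext'' {T T' : Filling} (hl : T.len = T'.len)
    (hs : ∀ i, T.shape i = T'.shape i) (hd : T.dots = T'.dots) : T = T' := by
  have hs' : T.shape = T'.shape := funext hs
  cases T; cases T'
  dsimp at hl hs' hd
  subst hl; subst hs'; subst hd
  rfl

namespace MData

variable (d : MData)

/-- The filling associated with the data `d`. -/
noncomputable def toFilling : Filling where
  len := d.n
  shape := fun i => if 1 ≤ i ∧ i ≤ d.n then shp d.X i else 0
  dots := (fun i => (i, d.a i)) '' Set.Icc 1 d.n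
  len_pos := d.n_pos
  shape_pos := fun i h1 h2 => by
    rw [if_pos ⟨h1, h2⟩]
    exact shp_pos d.one_not_mem h1
  shape_mono := fun i j h1 hij hj => by
    rw [if_pos ⟨h1, hij.trans hj⟩, if_pos ⟨h1.trans hij, hj⟩]
    exact shp_mono d.X hij
  shape_eq_zero := fun i hi => by
    rw [Set.mem_Icc] at hi
    exact if_neg (by omega)
  dots_mem := by
    rintro p ⟨i, hi, rfl⟩
    rw [Set.mem_Icc] at hi
    refine ⟨hi.1, hi.2, d.a_lb i hi.1 hi.2, ?_⟩
    dsimp only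
    rw [if_pos ⟨hi.1, hi.2⟩]
    exact d.a_ub i hi.1 hi.2

theorem toFilling_len : d.toFilling.len = d.n := rfl

theorem toFilling_shape {i : ℕ} (h1 : 1 ≤ i) (h2 : i ≤ d.n) :
    d.toFilling.shape i = shp d.X i := if_pos ⟨h1, h2⟩

theorem toFilling_dots_iff {i j : ℕ} (h1 : 1 ≤ i) (h2 : i ≤ d.n) :
    ((i, j) ∈ d.toFilling.dots ↔ j = d.a i) := by
  constructor
  · rintro ⟨i', hi', he⟩
    rw [Prod.mk.injEq] at he
    obtain ⟨he1, he2⟩ := he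
    subst he1
    exact he2.symm
  · rintro rfl
    exact ⟨i, Set.mem_Icc.mpr ⟨h1, h2⟩, rfl⟩

theorem toFilling_colStrict : d.toFilling.ColumnStrict := by
  intro i h1 h2
  refine ⟨d.a i, (d.toFilling_dots_iff h1 h2).mpr rfl, fun j hj => (d.toFilling_dots_iff h1 h2).mp hj⟩

theorem toFilling_rowLen_of_gt {j : ℕ} (hj : shp d.X d.n < j) :
    d.toFilling.rowLen j = 0 := by
  rw [Filling.rowLen]
  convert Set.ncard_empty ℕ
  rw [Set.eq_empty_iff_forall_notMem]
  rintro i ⟨h1, h2, h3⟩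
  rw [toFilling_len] at h2
  rw [d.toFilling_shape h1 h2] at h3
  have := shp_mono d.X h2
  omega

open Classical in
theorem toFilling_rowLen {j : ℕ} (hj1 : 1 ≤ j) (hj2 : j ≤ shp d.X d.n) :
    ∃ mj, 1 ≤ mj ∧ mj ≤ d.n ∧ shp d.X mj = j ∧
      d.toFilling.rowLen j = d.n + 1 - mj := by
  have hex : ∃ i, 1 ≤ i ∧ j ≤ shp d.X i := ⟨d.n, d.n_pos, hj2⟩
  obtain ⟨mj, hspec, hmjn, hmin⟩ :
      ∃ mj, (1 ≤ mj ∧ j ≤ shp d.X mj) ∧ mj ≤ d.n ∧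
        ∀ l, l < mj → ¬(1 ≤ l ∧ j ≤ shp d.X l) := by
    classical
    exact ⟨Nat.find hex, Nat.find_spec hex, Nat.find_le ⟨d.n_pos, hj2⟩,
      fun l hl => Nat.find_min hex hl⟩
  have hval : shp d.X mj = j := by
    rcases Nat.eq_or_lt_of_le hspec.1 with h | h
    · have h1 := shp_one d.one_not_mem
      rw [← h] at hspec ⊢
      omega
    · have hlt : shp d.X (mj - 1) < j := by
        have := hmin (mj - 1) (by omega)
        push_neg at this
        exact this (by omega)
      have := shp_succ_le d.X (mj - 1)
      rw [show mj - 1 + 1 = mj by omega] at this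
      omega
  refine ⟨mj, hspec.1, hmjn, hval, ?_⟩
  have hset : {i | 1 ≤ i ∧ i ≤ d.toFilling.len ∧ j ≤ d.toFilling.shape i}
      = Set.Icc mj d.n := by
    ext i
    rw [Set.mem_setOf_eq, Set.mem_Icc, toFilling_len]
    constructor
    · rintro ⟨h1, h2, h3⟩
      rw [d.toFilling_shape h1 h2] at h3
      refine ⟨?_, h2⟩
      by_contra hc
      exact hmin i (by omega) ⟨h1, h3⟩
    · rintro ⟨h1, h2⟩
      have hi1 : 1 ≤ i := hspec.1.trans h1
      refine ⟨hi1, h2, ?_⟩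
      rw [d.toFilling_shape hi1 h2]
      exact hspec.2.trans (shp_mono d.X h1)
  rw [Filling.rowLen, hset, ncard_Icc_nat]

theorem toFilling_flat : d.toFilling.Flat := by
  intro j j' hj1 hj'1 hne hrl hrl'
  have hj2 : j ≤ shp d.X d.n := by
    by_contra hc
    rw [d.toFilling_rowLen_of_gt (by omega)] at hrl
    omega
  have hj'2 : j' ≤ shp d.X d.n := by
    by_contra hc
    rw [d.toFilling_rowLen_of_gt (by omega)] at hrl'
    omega
  obtain ⟨mj, hm1, hm2, hm3, hm4⟩ := d.toFilling_rowLen hj1 hj2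
  obtain ⟨mj', hm'1, hm'2, hm'3, hm'4⟩ := d.toFilling_rowLen hj'1 hj'2
  rw [hm4, hm'4]
  intro hc
  have : mj = mj' := by omega
  subst this
  exact hne (hm3 ▸ hm'3 ▸ rfl)

end MData

namespace Filling

/-- The row of the dot in column `i` of a column-strict filling. -/
noncomputable def alpha (T : Filling) (i : ℕ) : ℕ := sSup {j | (i, j) ∈ T.dots}

theorem alpha_spec (T : Filling) (hCS : T.ColumnStrict) {i : ℕ}
    (h1 : 1 ≤ i) (h2 : i ≤ T.len) :
    (i, T.alpha i) ∈ T.dots ∧ ∀ j, (i, j) ∈ T.dots → j = T.alpha i := by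
  obtain ⟨j₀, hj₀, huniq⟩ := hCS i h1 h2
  have hset : {j | (i, j) ∈ T.dots} = {j₀} := by
    ext j
    rw [Set.mem_setOf_eq, Set.mem_singleton_iff]
    exact ⟨fun h => huniq j h, fun h => h ▸ hj₀⟩
  rw [alpha, hset, csSup_singleton]
  exact ⟨hj₀, fun j hj => huniq j hj⟩

theorem alpha_eq_zero (T : Filling) {i : ℕ} (h : i ∉ Set.Icc 1 T.len) :
    T.alpha i = 0 := by
  have hset : {j | (i, j) ∈ T.dots} = ∅ := by
    rw [Set.eq_empty_iff_forall_notMem]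
    intro j hj
    have := T.dots_mem _ hj
    rw [Set.mem_Icc] at h
    dsimp at this
    omega
  rw [alpha, hset, csSup_empty]
  rfl

theorem shape_one (T : Filling) (hF : T.Flat) : T.shape 1 = 1 := by
  by_contra hc
  have h1 : 1 ≤ T.shape 1 := T.shape_pos 1 le_rfl T.len_pos
  have h2 : 2 ≤ T.shape 1 := by omega
  have hset : ∀ j, 1 ≤ j → j ≤ 2 →
      {i | 1 ≤ i ∧ i ≤ T.len ∧ j ≤ T.shape i} = Set.Icc 1 T.len := by
    intro j hj1 hj2
    ext i
    rw [Set.mem_setOf_eq, Set.mem_Icc]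
    constructor
    · rintro ⟨a, b, _⟩; exact ⟨a, b⟩
    · rintro ⟨a, b⟩
      exact ⟨a, b, le_trans (by omega) ((T.shape_mono 1 i le_rfl a b))⟩
  have hr1 : T.rowLen 1 = T.len := by
    rw [rowLen, hset 1 le_rfl (by omega), ncard_Icc_nat]; omega
  have hr2 : T.rowLen 2 = T.len := by
    rw [rowLen, hset 2 (by omega) le_rfl, ncard_Icc_nat]; omega
  have := hF 1 2 le_rfl (by omega) (by omega) (by rw [hr1]; exact T.len_pos)
    (by rw [hr2]; exact T.len_pos)
  rw [hr1, hr2] at this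
  exact this rfl

theorem shape_step (T : Filling) (hF : T.Flat) {i : ℕ} (h1 : 1 ≤ i)
    (h2 : i + 1 ≤ T.len) : T.shape (i + 1) ≤ T.shape i + 1 := by
  by_contra hc
  have hmono := T.shape_mono i (i+1) h1 (by omega) h2
  have hsp := T.shape_pos i h1 (by omega)
  have hset : ∀ j, T.shape i < j → j ≤ T.shape (i+1) →
      {l | 1 ≤ l ∧ l ≤ T.len ∧ j ≤ T.shape l} = Set.Icc (i+1) T.len := by
    intro j hja hjb
    ext l
    rw [Set.mem_setOf_eq, Set.mem_Icc]
    constructor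
    · rintro ⟨a, b, c⟩
      refine ⟨?_, b⟩
      by_contra hl
      have := T.shape_mono l i a (by omega) (by omega)
      omega
    · rintro ⟨a, b⟩
      exact ⟨by omega, b, le_trans hjb (T.shape_mono (i+1) l (by omega) a b)⟩
  have hr1 : T.rowLen (T.shape i + 1) = T.len - i := by
    rw [rowLen, hset _ (by omega) (by omega), ncard_Icc_nat]; omega
  have hr2 : T.rowLen (T.shape i + 2) = T.len - i := by
    rw [rowLen, hset _ (by omega) (by omega), ncard_Icc_nat]; omega
  have := hF (T.shape i + 1) (T.shape i + 2) (by omega) (by omega) (by omega)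
    (by rw [hr1]; omega) (by rw [hr2]; omega)
  rw [hr1, hr2] at this
  exact this rfl

theorem shape_eq_shp (T : Filling) (hF : T.Flat) :
    ∀ i, 1 ≤ i → i ≤ T.len → T.shape i = shp T.lazySet i := by
  intro i
  induction i with
  | zero => omega
  | succ k ih =>
    intro _ h2
    rcases Nat.lt_or_ge k 1 with hk | hk
    · have : k = 0 := by omega
      subst this
      rw [T.shape_one hF, shp_one]
      intro hc
      exact absurd hc.1 (by omega)
    · have hs := ih hk (by omega)
      by_cases hX : k + 1 ∈ T.lazySet
      · rw [shp_succ_mem hX]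
        have := hX.2.2
        rw [show k + 1 - 1 = k by omega] at this
        omega
      · rw [shp_succ_not_mem hX]
        have hnotlazy : ¬ (T.shape k = T.shape (k+1)) := by
          intro hc
          exact hX ⟨by omega, h2, by rw [show k + 1 - 1 = k by omega]; exact hc⟩
        have hmono := T.shape_mono k (k+1) hk (by omega) h2
        have hstep := T.shape_step hF hk h2
        omega

end Filling

/-- The data associated with a flat column-strict filling. -/
noncomputable def fillingData (T : Filling) (hCS : T.ColumnStrict) (hF : T.Flat) :
    MData where
  n := T.len
  X := T.lazySet
  a := T.alpha
  n_pos := T.len_pos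
  X_sub := fun x hx => Set.mem_Icc.mpr ⟨hx.1, hx.2.1⟩
  a_lb := fun i h1 h2 => (T.dots_mem _ (T.alpha_spec hCS h1 h2).1).2.2.1
  a_ub := fun i h1 h2 => by
    have := (T.dots_mem _ (T.alpha_spec hCS h1 h2).1).2.2.2
    dsimp at this
    rw [T.shape_eq_shp hF i h1 h2] at this
    exact this
  a_zero := fun i hi => T.alpha_eq_zero hi

theorem fillingData_n (T : Filling) (hCS : T.ColumnStrict) (hF : T.Flat) :
    (fillingData T hCS hF).n = T.len := rfl
theorem fillingData_X (T : Filling) (hCS : T.ColumnStrict) (hF : T.Flat) :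
    (fillingData T hCS hF).X = T.lazySet := rfl
theorem fillingData_a (T : Filling) (hCS : T.ColumnStrict) (hF : T.Flat) :
    (fillingData T hCS hF).a = T.alpha := rfl

/-- Round trip: data of the filling of `d` is `d`. -/
theorem fillingData_toFilling (d : MData) (hCS : d.toFilling.ColumnStrict)
    (hF : d.toFilling.Flat) : fillingData d.toFilling hCS hF = d := by
  apply MData.ext'
  · rfl
  · -- lazy set of toFilling = X
    rw [fillingData_X]
    ext i
    constructor
    · rintro ⟨h1, h2, h3⟩
      rw [MData.toFilling_len] at h2
      rw [d.toFilling_shape (by omega) (by omega), d.toFilling_shape (by omega) h2] at h3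
      by_contra hc
      have := shp_succ_not_mem (X := d.X) (i := i - 1) (by rw [show i - 1 + 1 = i by omega]; exact hc)
      rw [show i - 1 + 1 = i by omega] at this
      omega
    · intro hx
      have hb := d.X_sub hx
      rw [Set.mem_Icc] at hb
      refine ⟨hb.1, by rw [MData.toFilling_len]; exact hb.2, ?_⟩
      rw [d.toFilling_shape (by omega) (by omega), d.toFilling_shape (by omega) hb.2]
      have := shp_succ_mem (X := d.X) (i := i - 1) (by rw [show i - 1 + 1 = i by omega]; exact hx)
      rw [show i - 1 + 1 = i by omega] at this
      omega
  · rw [fillingData_a]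
    funext i
    by_cases hi : 1 ≤ i ∧ i ≤ d.n
    · have hdot : (i, d.a i) ∈ d.toFilling.dots := (d.toFilling_dots_iff hi.1 hi.2).mpr rfl
      exact ((d.toFilling.alpha_spec hCS hi.1 hi.2).2 _ hdot).symm
    · rw [d.toFilling.alpha_eq_zero (by rw [Set.mem_Icc, MData.toFilling_len]; omega),
        d.a_zero i (by rw [Set.mem_Icc]; omega)]

/-- Round trip: the filling of the data of `T` is `T`. -/
theorem toFilling_fillingData (T : Filling) (hCS : T.ColumnStrict) (hF : T.Flat) :
    (fillingData T hCS hF).toFilling = T := by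
  apply Filling.ext''
  · rfl
  · intro i
    by_cases hi : 1 ≤ i ∧ i ≤ T.len
    · rw [(fillingData T hCS hF).toFilling_shape hi.1 hi.2]
      exact (T.shape_eq_shp hF i hi.1 hi.2).symm
    · rw [T.shape_eq_zero i (by rw [Set.mem_Icc]; omega)]
      exact if_neg (by simp only [fillingData_n]; omega)
  · ext ⟨i, j⟩
    by_cases hi : 1 ≤ i ∧ i ≤ T.len
    · rw [(fillingData T hCS hF).toFilling_dots_iff hi.1 hi.2]
      constructor
      · rintro rfl
        exact (T.alpha_spec hCS hi.1 hi.2).1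
      · intro h
        exact (T.alpha_spec hCS hi.1 hi.2).2 j h
    · constructor
      · rintro ⟨i', hi', he⟩
        rw [Set.mem_Icc, fillingData_n] at hi'
        rw [Prod.mk.injEq] at he
        obtain ⟨he1, he2⟩ := he
        subst he1
        omega
      · intro h
        have := T.dots_mem _ h
        dsimp at this
        omega

/-! ## Statistics of fillings in terms of `alpha` -/

namespace Filling

variable (T : Filling)

theorem nDots_eq (hCS : T.ColumnStrict) (hF : T.Flat) : T.nDots = T.len := by
  have hd : T.dots = (fun i => (i, T.alpha i)) '' Set.Icc 1 T.len := by
    conv_lhs => rw [← toFilling_fillingData T hCS hF]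
    rfl
  rw [nDots, hd, Set.ncard_image_of_injOn (fun a _ b _ he => (Prod.mk.injEq _ _ _ _).mp he |>.1),
    ncard_Icc_nat]
  omega

theorem minSet_eq (hCS : T.ColumnStrict) : T.MinSet = {i | 1 ≤ i ∧ i ≤ T.len ∧ T.alpha i = 1} := by
  ext i
  simp only [MinSet, Set.mem_setOf_eq]
  constructor
  · rintro ⟨h1, h2, hdot⟩
    exact ⟨h1, h2, ((T.alpha_spec hCS h1 h2).2 1 hdot).symm⟩
  · rintro ⟨h1, h2, ha⟩
    refine ⟨h1, h2, ?_⟩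
    have := (T.alpha_spec hCS h1 h2).1
    rw [ha] at this
    exact this

theorem lazy_bounds {i : ℕ} (h : i ∈ T.lazySet) : 2 ≤ i ∧ i ≤ T.len := ⟨h.1, h.2.1⟩

theorem desSet_inter (hCS : T.ColumnStrict) : T.DesSet ∩ T.lazySet
    = {i | i ∈ T.lazySet ∧ T.alpha i < T.alpha (i - 1)} := by
  ext i
  simp only [DesSet, Set.mem_inter_iff, Set.mem_setOf_eq]
  constructor
  · rintro ⟨⟨h1, h2, j, j', hd1, hd2, hlt⟩, hlazy⟩
    have hj := (T.alpha_spec hCS (by omega : 1 ≤ i - 1) (by omega)).2 j hd1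
    have hj' := (T.alpha_spec hCS (by omega : 1 ≤ i) h2).2 j' hd2
    exact ⟨hlazy, by omega⟩
  · rintro ⟨hlazy, hlt⟩
    obtain ⟨h1, h2⟩ := T.lazy_bounds hlazy
    exact ⟨⟨h1, h2, T.alpha (i-1), T.alpha i,
      (T.alpha_spec hCS (by omega) (by omega)).1,
      (T.alpha_spec hCS (by omega) h2).1, hlt⟩, hlazy⟩

theorem ascSet_inter (hCS : T.ColumnStrict) : T.AscSet ∩ T.lazySet
    = {i | i ∈ T.lazySet ∧ T.alpha (i - 1) < T.alpha i} := by
  ext i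
  simp only [AscSet, Set.mem_inter_iff, Set.mem_setOf_eq]
  constructor
  · rintro ⟨⟨h1, h2, j, j', hd1, hd2, hlt⟩, hlazy⟩
    have hj := (T.alpha_spec hCS (by omega : 1 ≤ i - 1) (by omega)).2 j hd1
    have hj' := (T.alpha_spec hCS (by omega : 1 ≤ i) h2).2 j' hd2
    exact ⟨hlazy, by omega⟩
  · rintro ⟨hlazy, hlt⟩
    obtain ⟨h1, h2⟩ := T.lazy_bounds hlazy
    exact ⟨⟨h1, h2, T.alpha (i-1), T.alpha i,
      (T.alpha_spec hCS (by omega) (by omega)).1,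
      (T.alpha_spec hCS (by omega) h2).1, hlt⟩, hlazy⟩

theorem repSet_inter (hCS : T.ColumnStrict) : T.RepSet ∩ T.lazySet
    = {i | i ∈ T.lazySet ∧ T.alpha i = T.alpha (i - 1)} := by
  ext i
  simp only [RepSet, Set.mem_inter_iff, Set.mem_setOf_eq]
  constructor
  · rintro ⟨⟨h1, h2, j, hd1, hd2⟩, hlazy⟩
    have hj := (T.alpha_spec hCS (by omega : 1 ≤ i - 1) (by omega)).2 j hd1
    have hj' := (T.alpha_spec hCS (by omega : 1 ≤ i) h2).2 j hd2
    exact ⟨hlazy, by omega⟩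
  · rintro ⟨hlazy, heq⟩
    obtain ⟨h1, h2⟩ := T.lazy_bounds hlazy
    refine ⟨⟨h1, h2, T.alpha i, ?_, (T.alpha_spec hCS (by omega) h2).1⟩, hlazy⟩
    have := (T.alpha_spec hCS (by omega : 1 ≤ i - 1) (by omega : i - 1 ≤ T.len)).1
    rw [← heq] at this
    exact this

end Filling

/-! ## The bijection -/

noncomputable def fillingToMarked (T : {T : Filling // T.ColumnStrict ∧ T.Flat}) :
    MarkedMatching := (fillingData T.1 T.2.1 T.2.2).toMarked

noncomputable def markedToFilling (m : MarkedMatching) :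
    {T : Filling // T.ColumnStrict ∧ T.Flat} :=
  ⟨m.toData.toFilling, m.toData.toFilling_colStrict, m.toData.toFilling_flat⟩

theorem fillingToMarked_leftInv :
    Function.LeftInverse markedToFilling fillingToMarked := by
  intro T
  apply Subtype.ext
  show (fillingData T.1 T.2.1 T.2.2).toMarked.toData.toFilling = T.1
  rw [MData.toMarked_toData, toFilling_fillingData]

theorem fillingToMarked_rightInv :
    Function.RightInverse markedToFilling fillingToMarked := by
  intro m
  show (fillingData m.toData.toFilling m.toData.toFilling_colStrict m.toData.toFilling_flat).toMarked = m
  rw [fillingData_toFilling, MarkedMatching.toMarked_toData]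

/-! ## Direct sums -/

theorem shp_dsum_low {A B : Set ℕ} {n₁ n₂ : ℕ} (hA : A ⊆ Set.Icc 2 n₁)
    (hB : B ⊆ Set.Icc 2 n₂) {j : ℕ} (hj : j ≤ n₁) :
    shp (A ∪ (fun a => a + n₁) '' B) j = shp A j := by
  apply cnt_congr
  intro v hv1 hv2
  constructor
  · intro hv hvA
    exact hv (Or.inl hvA)
  · rintro hv (hvA | ⟨b, hb, hbe⟩)
    · exact hv hvA
    · have := hB hb
      rw [Set.mem_Icc] at this
      dsimp only at hbe
      omega

theorem shp_dsum_high {A B : Set ℕ} {n₁ n₂ : ℕ} (hA : A ⊆ Set.Icc 2 n₁)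
    (hB : B ⊆ Set.Icc 2 n₂) (r : ℕ) :
    shp (A ∪ (fun a => a + n₁) '' B) (n₁ + r) = shp A n₁ + shp B r := by
  rw [shp, cnt_shift]
  have h1 : cnt n₁ (fun v => v ∉ A ∪ (fun a => a + n₁) '' B) = shp A n₁ :=
    shp_dsum_low hA hB le_rfl
  have h2 : cnt r (fun v => n₁ + v ∉ A ∪ (fun a => a + n₁) '' B) = shp B r := by
    apply cnt_congr
    intro v hv1 hv2
    constructor
    · intro hv hvB
      refine hv (Or.inr ⟨v, hvB, by dsimp only; omega⟩)
    · rintro hv (hvA | ⟨b, hb, hbe⟩)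
      · have := hA hvA
        rw [Set.mem_Icc] at this
        omega
      · dsimp only at hbe
        have : b = v := by omega
        subst this
        exact hv hb
  rw [h1, h2]

theorem MData.dsum_marked (d d' e : MData) (hn : e.n = d.n + d'.n)
    (hX : e.X = d.X ∪ (fun a => a + d.n) '' d'.X)
    (ha1 : ∀ i, 1 ≤ i → i ≤ d.n → e.a i = d.a i)
    (ha2 : ∀ r, 1 ≤ r → r ≤ d'.n → e.a (d.n + r) = d'.a r + shp d.X d.n) :
    MarkedMatching.IsDsum d.toMarked d'.toMarked e.toMarked := by
  have hs1 : ∀ j, j ≤ d.n → shp e.X j = shp d.X j := by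
    intro j hj
    rw [hX]
    exact shp_dsum_low d.X_sub d'.X_sub hj
  have hs2 : ∀ r, shp e.X (d.n + r) = shp d.X d.n + shp d'.X r := by
    intro r
    rw [hX]
    exact shp_dsum_high d.X_sub d'.X_sub r
  have hub : ∀ j, 1 ≤ j → j ≤ d.n → d.a j ≤ shp d.X d.n :=
    fun j h1 h2 => (d.a_ub j h1 h2).trans (shp_mono d.X h2)
  have hcl_low : ∀ i, 1 ≤ i → i ≤ d.n → e.mcl i = d.mcl i := by
    intro i h1 h2
    rw [e.mcl_eq h1 (by omega), d.mcl_eq h1 h2, hn, cnt_shift]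
    have hzero : cnt d'.n (fun v => e.a (d.n + v) ≤ shp e.X i) = 0 := by
      apply cnt_false
      intro v hv1 hv2 hP
      rw [ha2 v hv1 hv2, hs1 i h2] at hP
      have h3 := d'.a_lb v hv1 hv2
      have h4 := shp_mono d.X h2
      omega
    have hcongr : cnt d.n (fun j => e.a j ≤ shp e.X i)
        = cnt d.n (fun j => d.a j ≤ shp d.X i) := by
      apply cnt_congr
      intro j hj1 hj2
      rw [ha1 j hj1 hj2, hs1 i h2]
    rw [hzero, hcongr]
    omega
  have hcl_high : ∀ r, 1 ≤ r → r ≤ d'.n → e.mcl (d.n + r) = d'.mcl r + 2 * d.n := by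
    intro r h1 h2
    rw [e.mcl_eq (by omega) (by omega), d'.mcl_eq h1 h2, hn, cnt_shift]
    have hfull : cnt d.n (fun j => e.a j ≤ shp e.X (d.n + r)) = d.n := by
      apply cnt_true
      intro j hj1 hj2
      rw [ha1 j hj1 hj2, hs2 r]
      have := hub j hj1 hj2
      omega
    have hcongr : cnt d'.n (fun v => e.a (d.n + v) ≤ shp e.X (d.n + r))
        = cnt d'.n (fun v => d'.a v ≤ shp d'.X r) := by
      apply cnt_congr
      intro v hv1 hv2
      rw [ha2 v hv1 hv2, hs2 r]
      omega
    rw [hfull, hcongr]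
    omega
  have hop_low : ∀ i, 1 ≤ i → i ≤ d.n → e.mop i = d.mop i := by
    intro i h1 h2
    rw [e.mop_eq h1 (by omega), d.mop_eq h1 h2, hn, cnt_shift, cnt_shift, cnt_shift]
    have hai := d.a_ub i h1 h2
    have hain := hub i h1 h2
    have hz1 : cnt d'.n (fun v => shp e.X (d.n + v) < e.a i) = 0 := by
      apply cnt_false
      intro v hv1 hv2 hP
      rw [ha1 i h1 h2, hs2 v] at hP
      have := shp_pos d'.one_not_mem hv1
      omega
    have hz2 : cnt d'.n (fun v => e.a (d.n + v) < e.a i) = 0 := by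
      apply cnt_false
      intro v hv1 hv2 hP
      rw [ha1 i h1 h2, ha2 v hv1 hv2] at hP
      omega
    have hz3 : cnt d'.n (fun v => e.a (d.n + v) = e.a i ∧ d.n + v < i) = 0 := by
      apply cnt_false
      intro v hv1 hv2 hP
      omega
    have hc1 : cnt d.n (fun j => shp e.X j < e.a i) = cnt d.n (fun j => shp d.X j < d.a i) := by
      apply cnt_congr
      intro j hj1 hj2
      rw [ha1 i h1 h2, hs1 j hj2]
    have hc2 : cnt d.n (fun j => e.a j < e.a i) = cnt d.n (fun j => d.a j < d.a i) := by
      apply cnt_congr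
      intro j hj1 hj2
      rw [ha1 i h1 h2, ha1 j hj1 hj2]
    have hc3 : cnt d.n (fun j => e.a j = e.a i ∧ j < i)
        = cnt d.n (fun j => d.a j = d.a i ∧ j < i) := by
      apply cnt_congr
      intro j hj1 hj2
      rw [ha1 i h1 h2, ha1 j hj1 hj2]
    rw [hz1, hz2, hz3, hc1, hc2, hc3]
    omega
  have hop_high : ∀ r, 1 ≤ r → r ≤ d'.n → e.mop (d.n + r) = d'.mop r + 2 * d.n := by
    intro r h1 h2
    rw [e.mop_eq (by omega) (by omega), d'.mop_eq h1 h2, hn, cnt_shift, cnt_shift, cnt_shift]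
    have har := d'.a_lb r h1 h2
    have hf1 : cnt d.n (fun j => shp e.X j < e.a (d.n + r)) = d.n := by
      apply cnt_true
      intro j hj1 hj2
      rw [ha2 r h1 h2, hs1 j hj2]
      have := shp_mono d.X hj2
      omega
    have hf2 : cnt d.n (fun j => e.a j < e.a (d.n + r)) = d.n := by
      apply cnt_true
      intro j hj1 hj2
      rw [ha2 r h1 h2, ha1 j hj1 hj2]
      have := hub j hj1 hj2
      omega
    have hz3 : cnt d.n (fun j => e.a j = e.a (d.n + r) ∧ j < d.n + r) = 0 := by
      apply cnt_false
      rintro j hj1 hj2 ⟨hP, _⟩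
      rw [ha2 r h1 h2, ha1 j hj1 hj2] at hP
      have := hub j hj1 hj2
      omega
    have hc1 : cnt d'.n (fun v => shp e.X (d.n + v) < e.a (d.n + r))
        = cnt d'.n (fun v => shp d'.X v < d'.a r) := by
      apply cnt_congr
      intro v hv1 hv2
      rw [ha2 r h1 h2, hs2 v]
      omega
    have hc2 : cnt d'.n (fun v => e.a (d.n + v) < e.a (d.n + r))
        = cnt d'.n (fun v => d'.a v < d'.a r) := by
      apply cnt_congr
      intro v hv1 hv2
      rw [ha2 r h1 h2, ha2 v hv1 hv2]
      omega
    have hc3 : cnt d'.n (fun v => e.a (d.n + v) = e.a (d.n + r) ∧ d.n + v < d.n + r)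
        = cnt d'.n (fun v => d'.a v = d'.a r ∧ v < r) := by
      apply cnt_congr
      intro v hv1 hv2
      rw [ha2 r h1 h2, ha2 v hv1 hv2]
      omega
    rw [hf1, hf2, hz3, hc1, hc2, hc3]
    omega
  constructor
  · refine ⟨hn, ?_, ?_⟩
    · intro i h1 h2
      exact ⟨hop_low i h1 h2, hcl_low i h1 h2⟩
    · intro i h1 h2
      exact ⟨hop_high i h1 h2, hcl_high i h1 h2⟩
  · exact hX

namespace Filling

theorem dsum_lazySet {T T' S : Filling} (h : Filling.IsDsum T T' S) :
    S.lazySet = T.lazySet ∪ (fun a => a + T.len) '' T'.lazySet := by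
  obtain ⟨hlen, hsh1, hsh2, hdots⟩ := h
  ext i
  simp only [lazySet, Set.mem_union, Set.mem_image, Set.mem_setOf_eq]
  constructor
  · rintro ⟨h2, hSl, hsh⟩
    rcases Nat.lt_or_ge T.len i with hgt | hle
    · right
      have hr1 : 1 ≤ i - T.len := by omega
      have hr2 : i - T.len ≤ T'.len := by omega
      rcases Nat.lt_or_ge (i - T.len) 2 with hr | hr
      · exfalso
        have hi : i = T.len + 1 := by omega
        have e1 : S.shape T.len = T.shape T.len := hsh1 T.len T.len_pos le_rfl
        have e2 : S.shape (T.len + 1) = T.shape T.len + T'.shape 1 :=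
          hsh2 1 le_rfl T'.len_pos
        have e3 := T'.shape_pos 1 le_rfl T'.len_pos
        rw [hi, show T.len + 1 - 1 = T.len by omega, e1, e2] at hsh
        omega
      · refine ⟨i - T.len, ⟨hr, hr2, ?_⟩, by omega⟩
        have e1 : S.shape (T.len + (i - T.len - 1)) = T.shape T.len + T'.shape (i - T.len - 1) :=
          hsh2 (i - T.len - 1) (by omega) (by omega)
        have e2 : S.shape (T.len + (i - T.len)) = T.shape T.len + T'.shape (i - T.len) :=
          hsh2 (i - T.len) hr1 hr2
        rw [show T.len + (i - T.len - 1) = i - 1 by omega] at e1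
        rw [show T.len + (i - T.len) = i by omega] at e2
        omega
    · left
      have e1 : S.shape (i - 1) = T.shape (i - 1) := hsh1 (i - 1) (by omega) (by omega)
      have e2 : S.shape i = T.shape i := hsh1 i (by omega) hle
      exact ⟨h2, hle, by omega⟩
  · rintro (⟨h2, hTl, hsh⟩ | ⟨r, ⟨hr2, hrl, hsh'⟩, rfl⟩)
    · have e1 : S.shape (i - 1) = T.shape (i - 1) := hsh1 (i - 1) (by omega) (by omega)
      have e2 : S.shape i = T.shape i := hsh1 i (by omega) hTl
      have := T'.len_pos
      exact ⟨h2, by omega, by omega⟩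
    · have e1 : S.shape (T.len + (r - 1)) = T.shape T.len + T'.shape (r - 1) :=
        hsh2 (r - 1) (by omega) (by omega)
      have e2 : S.shape (T.len + r) = T.shape T.len + T'.shape r :=
        hsh2 r (by omega) hrl
      rw [show T.len + (r - 1) = r + T.len - 1 by omega] at e1
      rw [show T.len + r = r + T.len by omega] at e2
      exact ⟨by omega, by omega, by omega⟩

theorem dsum_alpha_low {T T' S : Filling} (hCT : T.ColumnStrict) (hCS : S.ColumnStrict)
    (h : Filling.IsDsum T T' S) {i : ℕ} (h1 : 1 ≤ i) (h2 : i ≤ T.len) :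
    S.alpha i = T.alpha i := by
  obtain ⟨hlen, hsh1, hsh2, hdots⟩ := h
  have hdot : (i, T.alpha i) ∈ S.dots := by
    rw [hdots]
    exact Or.inl (T.alpha_spec hCT h1 h2).1
  have := T'.len_pos
  exact ((S.alpha_spec hCS h1 (by omega)).2 _ hdot).symm

theorem dsum_alpha_high {T T' S : Filling} (hCT' : T'.ColumnStrict) (hCS : S.ColumnStrict)
    (h : Filling.IsDsum T T' S) {r : ℕ} (h1 : 1 ≤ r) (h2 : r ≤ T'.len) :
    S.alpha (T.len + r) = T'.alpha r + T.shape T.len := by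
  obtain ⟨hlen, hsh1, hsh2, hdots⟩ := h
  have hdot : (T.len + r, T'.alpha r + T.shape T.len) ∈ S.dots := by
    rw [hdots]
    refine Or.inr ⟨(r, T'.alpha r), (T'.alpha_spec hCT' h1 h2).1, ?_⟩
    dsimp only
    rw [Prod.mk.injEq]
    omega
  exact ((S.alpha_spec hCS (by omega) (by omega)).2 _ hdot).symm

end Filling

theorem fillingToMarked_dsum (T T' S : {T : Filling // T.ColumnStrict ∧ T.Flat})
    (h : Filling.IsDsum T.1 T'.1 S.1) :
    MarkedMatching.IsDsum (fillingToMarked T) (fillingToMarked T') (fillingToMarked S) := by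
  obtain ⟨T, hCT, hFT⟩ := T
  obtain ⟨T', hCT', hFT'⟩ := T'
  obtain ⟨S, hCS, hFS⟩ := S
  show MarkedMatching.IsDsum (fillingData T hCT hFT).toMarked
    (fillingData T' hCT' hFT').toMarked (fillingData S hCS hFS).toMarked
  apply MData.dsum_marked
  · exact h.1
  · exact Filling.dsum_lazySet h
  · intro i h1 h2
    exact Filling.dsum_alpha_low hCT hCS h h1 h2
  · intro r h1 h2
    show S.alpha (T.len + r) = T'.alpha r + shp T.lazySet T.len
    rw [← T.shape_eq_shp hFT T.len T.len_pos le_rfl]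
    exact Filling.dsum_alpha_high hCT' hCS h h1 h2
/-- There is a bijection `f` from flat column-strict fillings to
marked matchings preserving all the listed statistics and respecting direct sums. -/
theorem flat_colstrict_fillings_equiv_marked_matchings :
    ∃ f : {T : Filling // T.ColumnStrict ∧ T.Flat} → MarkedMatching,
      Function.Bijective f ∧
      (∀ T : {T : Filling // T.ColumnStrict ∧ T.Flat},
        T.1.nDots = (f T).n ∧
        T.1.MinSet = (f T).M.MinSet ∧
        T.1.lazySet = (f T).X ∧
        T.1.DesSet ∩ T.1.lazySet = (f T).M.RneSet ∩ (f T).X ∧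
        T.1.AscSet ∩ T.1.lazySet = (f T).M.RcrpSet ∩ (f T).X ∧
        T.1.RepSet ∩ T.1.lazySet = (f T).M.LRcrSet ∩ (f T).X) ∧
      (∀ T T' S : {T : Filling // T.ColumnStrict ∧ T.Flat},
        Filling.IsDsum T.1 T'.1 S.1 → MarkedMatching.IsDsum (f T) (f T') (f S)) := by
  refine ⟨fillingToMarked, Function.bijective_iff_has_inverse.mpr
    ⟨markedToFilling, fillingToMarked_leftInv, fillingToMarked_rightInv⟩, ?_,
    fun T T' S h => fillingToMarked_dsum T T' S h⟩
  rintro ⟨T, hCS, hF⟩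
  refine ⟨?_, ?_, rfl, ?_, ?_, ?_⟩
  · rw [T.nDots_eq hCS hF]
    rfl
  · rw [T.minSet_eq hCS]
    show _ = (fillingData T hCS hF).toMatching.MinSet
    rw [MData.toMatching_min]
    rfl
  · rw [T.desSet_inter hCS]
    show _ = (fillingData T hCS hF).toMatching.RneSet ∩ (fillingData T hCS hF).X
    rw [MData.toMatching_rne]
    rfl
  · rw [T.ascSet_inter hCS]
    show _ = (fillingData T hCS hF).toMatching.RcrpSet ∩ (fillingData T hCS hF).X
    rw [MData.toMatching_rcrp]
    rfl
  · rw [T.repSet_inter hCS]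
    show _ = (fillingData T hCS hF).toMatching.LRcrSet ∩ (fillingData T hCS hF).X
    rw [MData.toMatching_lrcr]
    rfl
end
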